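/- arXiv:1803.00715 — 4 statements merged into one kernel-verified Lean document; each statement's English description precedes it below -/
import Mathlib

section
/- Let P, Q be Borel probability measures on ℝ^d satisfying the continuity assumption, and let ϑ ∈ (0,1). Then W_d(P,Q) ≥ ∫_{S^{d−1}} | 1/2 − (P ⊗ Q)({(x,y) ∈ ℝ^d × ℝ^d : ⟨β,x⟩ ≤ ⟨β,y⟩}) | dλ(β). -/
open MeasureTheory ProbabilityTheory Real
open scoped RealInnerProductSpace ENNReal BigOperators

noncomputable section

section Aux
open Set

/-- Cauchy–Schwarz for probability measures. -/
lemma abs_integral_le_sqrt_integral_sq {α : Type*} [MeasurableSpace α] {ρ : Measure α}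
    [IsProbabilityMeasure ρ] {h : α → ℝ} (h1 : Integrable h ρ)
    (h2 : Integrable (fun x => h x ^ 2) ρ) :
    |∫ x, h x ∂ρ| ≤ Real.sqrt (∫ x, h x ^ 2 ∂ρ) := by
  set m := ∫ x, h x ∂ρ with hm
  have key : m ^ 2 ≤ ∫ x, h x ^ 2 ∂ρ := by
    have e0 : (0:ℝ) ≤ ∫ x, (h x - m) ^ 2 ∂ρ := integral_nonneg fun x => sq_nonneg _
    have expand : ∫ x, (h x - m) ^ 2 ∂ρ = (∫ x, h x ^ 2 ∂ρ) - m ^ 2 := by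
      have e : ∀ x, (h x - m) ^ 2 = h x ^ 2 - (2*m) * h x + m ^ 2 := fun x => by ring
      simp_rw [e]
      have hInt : Integrable (fun x => h x ^ 2 - (2*m) * h x) ρ :=
        h2.sub (h1.const_mul (2*m))
      rw [integral_add hInt (integrable_const _),
        integral_sub h2 (h1.const_mul (2*m)), integral_const_mul, integral_const]
      simp only [measure_univ, probReal_univ, ENNReal.toReal_one, smul_eq_mul, one_mul, ← hm]
      ring
    linarith [expand ▸ e0]
  calc |m| = Real.sqrt (m ^ 2) := (Real.sqrt_sq_eq_abs m).symm
    _ ≤ _ := Real.sqrt_le_sqrt key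

lemma sLE_meas : MeasurableSet {p : ℝ × ℝ | p.1 ≤ p.2} :=
  measurableSet_le measurable_fst measurable_snd

lemma sGE_meas : MeasurableSet {p : ℝ × ℝ | p.2 ≤ p.1} :=
  measurableSet_le measurable_snd measurable_fst

lemma mono_Iic (μ : Measure ℝ) [IsFiniteMeasure μ] :
    Monotone fun t => (μ (Iic t)).toReal := fun s t hst =>
  ENNReal.toReal_mono (measure_ne_top μ _) (measure_mono (Iic_subset_Iic.2 hst))

lemma lint_eq (μ ν : Measure ℝ) [SFinite μ] [SFinite ν] :
    (μ.prod ν) {p : ℝ × ℝ | p.1 ≤ p.2} = ∫⁻ t, μ (Iic t) ∂ν := by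
  rw [Measure.prod_apply_symm sLE_meas]
  rfl

lemma int_cdf_eq (μ ν : Measure ℝ) [IsProbabilityMeasure μ] [IsProbabilityMeasure ν] :
    ∫ t, (μ (Iic t)).toReal ∂ν = ((μ.prod ν) {p : ℝ × ℝ | p.1 ≤ p.2}).toReal := by
  rw [lint_eq μ ν]
  refine integral_toReal ?_ ?_
  · exact (Monotone.measurable (fun s t hst => measure_mono (Iic_subset_Iic.2 hst))).aemeasurable
  · exact ae_of_all _ fun t => lt_of_le_of_lt prob_le_one ENNReal.one_lt_top

lemma diag_null (μ ν : Measure ℝ) [SFinite μ] [SFinite ν] (hν : ∀ t : ℝ, ν {t} = 0) :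
    (μ.prod ν) {p : ℝ × ℝ | p.1 = p.2} = 0 := by
  rw [Measure.prod_apply (measurableSet_eq_fun measurable_fst measurable_snd)]
  have : ∀ x : ℝ, ν (Prod.mk x ⁻¹' {p : ℝ × ℝ | p.1 = p.2}) = 0 := by
    intro x
    have : (Prod.mk x ⁻¹' {p : ℝ × ℝ | p.1 = p.2}) = {x} := by
      ext y; simp [eq_comm]
    rw [this]; exact hν x
  simp [this, hν]

lemma sum_one (μ ν : Measure ℝ) [IsProbabilityMeasure μ] [IsProbabilityMeasure ν]
    (hν : ∀ t : ℝ, ν {t} = 0) :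
    (μ.prod ν) {p : ℝ × ℝ | p.1 ≤ p.2} + (μ.prod ν) {p : ℝ × ℝ | p.2 ≤ p.1} = 1 := by
  have hu : {p : ℝ × ℝ | p.1 ≤ p.2} ∪ {p : ℝ × ℝ | p.2 ≤ p.1} = univ := by
    ext p; simp [le_total]
  have hi : {p : ℝ × ℝ | p.1 ≤ p.2} ∩ {p : ℝ × ℝ | p.2 ≤ p.1} = {p : ℝ × ℝ | p.1 = p.2} := by
    ext p; simp [le_antisymm_iff]
  have := measure_union_add_inter (μ := μ.prod ν) {p : ℝ × ℝ | p.1 ≤ p.2} sGE_meas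
  rw [hu, hi, diag_null μ ν hν, add_zero, measure_univ] at this
  exact this.symm

lemma swap_eq (μ ν : Measure ℝ) [SFinite μ] [SFinite ν] :
    (ν.prod μ) {p : ℝ × ℝ | p.1 ≤ p.2} = (μ.prod ν) {p : ℝ × ℝ | p.2 ≤ p.1} := by
  rw [← Measure.prod_swap, Measure.map_apply measurable_swap sLE_meas]
  rfl

lemma half_eq (μ : Measure ℝ) [IsProbabilityMeasure μ] (hμ : ∀ t : ℝ, μ {t} = 0) :
    ((μ.prod μ) {p : ℝ × ℝ | p.1 ≤ p.2}).toReal = 1/2 := by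
  have h1 := sum_one μ μ hμ
  have h2 : (μ.prod μ) {p : ℝ × ℝ | p.2 ≤ p.1} = (μ.prod μ) {p : ℝ × ℝ | p.1 ≤ p.2} :=
    (swap_eq μ μ).symm
  rw [h2] at h1
  have hne : (μ.prod μ) {p : ℝ × ℝ | p.1 ≤ p.2} ≠ ⊤ := measure_ne_top _ _
  have := congrArg ENNReal.toReal h1
  rw [ENNReal.toReal_add hne hne] at this
  simp at this
  linarith

lemma integrable_bdd {α : Type*} [MeasurableSpace α] {ρ : Measure α} [IsFiniteMeasure ρ]
    {f : α → ℝ} (hf : AEStronglyMeasurable f ρ) (C : ℝ) (hC : ∀ x, |f x| ≤ C) :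
    Integrable f ρ :=
  (integrable_const C).mono' hf (ae_of_all _ fun x => by simpa using hC x)

lemma cdfLeOne (μ : Measure ℝ) [IsProbabilityMeasure μ] (t : ℝ) :
    (μ (Iic t)).toReal ≤ 1 := by
  simpa using ENNReal.toReal_mono ENNReal.one_ne_top (prob_le_one (μ := μ) (s := Iic t))

lemma keyR (ϑ : ℝ) (hϑ0 : 0 ≤ ϑ) (hϑ1 : ϑ ≤ 1) (μ ν : Measure ℝ)
    [IsProbabilityMeasure μ] [IsProbabilityMeasure ν]
    (hμ : ∀ t : ℝ, μ {t} = 0) (hν : ∀ t : ℝ, ν {t} = 0) :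
    |1 / 2 - ((μ.prod ν) {p : ℝ × ℝ | p.1 ≤ p.2}).toReal| ≤
      Real.sqrt (∫ t, ((μ (Iic t)).toReal - (ν (Iic t)).toReal) ^ 2
        ∂(ENNReal.ofReal ϑ • μ + ENNReal.ofReal (1 - ϑ) • ν)) := by
  have h1ϑ : (0:ℝ) ≤ 1 - ϑ := by linarith
  set H : Measure ℝ := ENNReal.ofReal ϑ • μ + ENNReal.ofReal (1 - ϑ) • ν with hHdef
  have Hprob : IsProbabilityMeasure H := by
    constructor
    rw [hHdef]
    simp only [Measure.add_apply, Measure.smul_apply, measure_univ, smul_eq_mul, mul_one]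
    rw [← ENNReal.ofReal_add hϑ0 h1ϑ]
    norm_num
  set f : ℝ → ℝ := fun t => (μ (Iic t)).toReal with hfdef
  set g : ℝ → ℝ := fun t => (ν (Iic t)).toReal with hgdef
  set h : ℝ → ℝ := fun t => f t - g t with hhdef
  have hfm : Measurable f := (mono_Iic μ).measurable
  have hgm : Measurable g := (mono_Iic ν).measurable
  have hhm : Measurable h := hfm.sub hgm
  have hf0 : ∀ t, 0 ≤ f t := fun t => ENNReal.toReal_nonneg
  have hg0 : ∀ t, 0 ≤ g t := fun t => ENNReal.toReal_nonneg
  have hf1 : ∀ t, f t ≤ 1 := fun t => cdfLeOne μ t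
  have hg1 : ∀ t, g t ≤ 1 := fun t => cdfLeOne ν t
  have hfb : ∀ t, |f t| ≤ 1 := fun t => abs_le.2 ⟨by linarith [hf0 t], hf1 t⟩
  have hgb : ∀ t, |g t| ≤ 1 := fun t => abs_le.2 ⟨by linarith [hg0 t], hg1 t⟩
  have hhb : ∀ t, |h t| ≤ 1 := fun t =>
    abs_le.2 ⟨by simp only [hhdef]; linarith [hf0 t, hg1 t],
      by simp only [hhdef]; linarith [hf1 t, hg0 t]⟩
  have hintμ : Integrable h μ := integrable_bdd hhm.aestronglyMeasurable 1 hhb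
  have hintν : Integrable h ν := integrable_bdd hhm.aestronglyMeasurable 1 hhb
  have hintH : Integrable h H := integrable_bdd hhm.aestronglyMeasurable 1 hhb
  have hintH2 : Integrable (fun t => h t ^ 2) H := by
    refine integrable_bdd (hhm.pow_const 2).aestronglyMeasurable 1 fun t => ?_
    rw [abs_pow]
    calc |h t| ^ 2 ≤ 1 ^ 2 := pow_le_pow_left₀ (abs_nonneg _) (hhb t) 2
      _ = 1 := one_pow 2
  set A : ℝ := ((μ.prod ν) {p : ℝ × ℝ | p.1 ≤ p.2}).toReal with hAdef
  have e1 : ∫ t, f t ∂μ = 1/2 := (int_cdf_eq μ μ).trans (half_eq μ hμ)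
  have e2 : ∫ t, f t ∂ν = A := int_cdf_eq μ ν
  have e3 : ∫ t, g t ∂ν = 1/2 := (int_cdf_eq ν ν).trans (half_eq ν hν)
  have e4 : ∫ t, g t ∂μ = 1 - A := by
    rw [int_cdf_eq ν μ, swap_eq μ ν]
    have hsum := sum_one μ ν hν
    have hne1 : (μ.prod ν) {p : ℝ × ℝ | p.1 ≤ p.2} ≠ ⊤ := measure_ne_top _ _
    have hne2 : (μ.prod ν) {p : ℝ × ℝ | p.2 ≤ p.1} ≠ ⊤ := measure_ne_top _ _
    have h5 := congrArg ENNReal.toReal hsum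
    rw [ENNReal.toReal_add hne1 hne2] at h5
    simp only [ENNReal.toReal_one] at h5
    rw [← hAdef] at h5
    linarith
  have eμ : ∫ t, h t ∂μ = A - 1/2 := by
    rw [hhdef, integral_sub (integrable_bdd hfm.aestronglyMeasurable 1 hfb)
      (integrable_bdd hgm.aestronglyMeasurable 1 hgb), e1, e4]
    ring
  have eν : ∫ t, h t ∂ν = A - 1/2 := by
    rw [hhdef, integral_sub (integrable_bdd hfm.aestronglyMeasurable 1 hfb)
      (integrable_bdd hgm.aestronglyMeasurable 1 hgb), e2, e3]
  have eH : ∫ t, h t ∂H = A - 1/2 := by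
    rw [hHdef, integral_add_measure (hintμ.smul_measure ENNReal.ofReal_ne_top)
      (hintν.smul_measure ENNReal.ofReal_ne_top),
      integral_smul_measure, integral_smul_measure, eμ, eν,
      ENNReal.toReal_ofReal hϑ0, ENNReal.toReal_ofReal h1ϑ]
    simp only [smul_eq_mul]
    ring
  have key := abs_integral_le_sqrt_integral_sq hintH hintH2
  rw [eH, abs_sub_comm] at key
  exact key

end Aux
open Set

/-- The standard Gaussian measure on `ℝ^d = EuclideanSpace ℝ (Fin d)`. -/
def stdGaussian (d : ℕ) : Measure (EuclideanSpace ℝ (Fin d)) :=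
  (Measure.pi fun _ : Fin d => gaussianReal 0 1).map
    ⇑(EuclideanSpace.equiv (Fin d) ℝ).symm

/-- The uniform (rotation-invariant) probability measure `λ` on the unit sphere
`S^{d-1} = {x : ‖x‖ = 1} ⊆ ℝ^d`, realized as a Borel measure on `ℝ^d` concentrated
on the sphere: the pushforward of the standard Gaussian under `x ↦ ‖x‖⁻¹ • x`. -/
def sphereUniform (d : ℕ) : Measure (EuclideanSpace ℝ (Fin d)) :=
  (stdGaussian d).map fun x => ‖x‖⁻¹ • x

/-- `Ang u v = arccos (⟪u,v⟫ / (‖u‖ ‖v‖)) ∈ [0, π]`, the angle between two nonzero vectors. -/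
def Ang {d : ℕ} (u v : EuclideanSpace ℝ (Fin d)) : ℝ :=
  Real.arccos (⟪u, v⟫ / (‖u‖ * ‖v‖))

/-- Law of the projection `x ↦ ⟪β, x⟫` under `P`. -/
def projLaw {d : ℕ} (P : Measure (EuclideanSpace ℝ (Fin d)))
    (β : EuclideanSpace ℝ (Fin d)) : Measure ℝ :=
  P.map fun x => ⟪β, x⟫

/-- `F_{β,P}(t) = P {x : ⟪β,x⟫ ≤ t}`. -/
def projCDF {d : ℕ} (P : Measure (EuclideanSpace ℝ (Fin d)))
    (β : EuclideanSpace ℝ (Fin d)) (t : ℝ) : ℝ :=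
  (P {x | ⟪β, x⟫ ≤ t}).toReal

/-- The squared Cramér–von Mises distance `W_d²(P,Q)` with weight `ϑ`:
`∫_{S^{d-1}} ∫_ℝ (F_{β,P}(t) - F_{β,Q}(t))² dH_β(t) dλ(β)` where `H_β` is the law of
`x ↦ ⟪β,x⟫` under the mixture `ϑ•P + (1-ϑ)•Q`. -/
def cvmSq {d : ℕ} (ϑ : ℝ) (P Q : Measure (EuclideanSpace ℝ (Fin d))) : ℝ :=
  ∫ β, (∫ t, (projCDF P β t - projCDF Q β t) ^ 2
      ∂(projLaw (ENNReal.ofReal ϑ • P + ENNReal.ofReal (1 - ϑ) • Q) β))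
    ∂(sphereUniform d)

/-- The continuity assumption: for `λ`-a.e. `β`, the pushforwards of `P` and `Q`
under `x ↦ ⟪β,x⟫` are atomless. -/
def ContinuityAssumption {d : ℕ} (P Q : Measure (EuclideanSpace ℝ (Fin d))) : Prop :=
  ∀ᵐ β ∂(sphereUniform d),
    (∀ t : ℝ, projLaw P β {t} = 0) ∧ (∀ t : ℝ, projLaw Q β {t} = 0)



lemma measurable_inner_right {d : ℕ} (β : EuclideanSpace ℝ (Fin d)) :
    Measurable fun x : EuclideanSpace ℝ (Fin d) => ⟪β, x⟫ :=
  (continuous_const.inner continuous_id).measurable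

instance sphereUniform_prob (d : ℕ) : IsProbabilityMeasure (sphereUniform d) := by
  have h1 : IsProbabilityMeasure (stdGaussian d) := by
    unfold _root_.stdGaussian
    exact Measure.isProbabilityMeasure_map
      ((EuclideanSpace.equiv (Fin d) ℝ).symm.continuous.measurable).aemeasurable
  unfold sphereUniform
  exact Measure.isProbabilityMeasure_map ((measurable_norm.inv.smul measurable_id)).aemeasurable

instance projLaw_prob {d : ℕ} (P : Measure (EuclideanSpace ℝ (Fin d)))
    [IsProbabilityMeasure P] (β : EuclideanSpace ℝ (Fin d)) :
    IsProbabilityMeasure (projLaw P β) :=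
  Measure.isProbabilityMeasure_map (measurable_inner_right β).aemeasurable

lemma projCDF_eq {d : ℕ} (P : Measure (EuclideanSpace ℝ (Fin d)))
    (β : EuclideanSpace ℝ (Fin d)) (t : ℝ) :
    projCDF P β t = ((projLaw P β) (Set.Iic t)).toReal := by
  unfold projCDF projLaw
  rw [Measure.map_apply (measurable_inner_right β) measurableSet_Iic]
  rfl

lemma prodLaw_eq {d : ℕ} (P Q : Measure (EuclideanSpace ℝ (Fin d)))
    [IsProbabilityMeasure P] [IsProbabilityMeasure Q] (β : EuclideanSpace ℝ (Fin d)) :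
    (P.prod Q) {z : EuclideanSpace ℝ (Fin d) × EuclideanSpace ℝ (Fin d) | ⟪β, z.1⟫ ≤ ⟪β, z.2⟫}
      = ((projLaw P β).prod (projLaw Q β)) {p : ℝ × ℝ | p.1 ≤ p.2} := by
  unfold projLaw
  rw [Measure.map_prod_map _ _ (measurable_inner_right β) (measurable_inner_right β),
    Measure.map_apply ((measurable_inner_right β).prodMap (measurable_inner_right β)) sLE_meas]
  rfl

lemma projLaw_mix {d : ℕ} (P Q : Measure (EuclideanSpace ℝ (Fin d))) (a b : ℝ≥0∞)
    (β : EuclideanSpace ℝ (Fin d)) :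
    projLaw (a • P + b • Q) β = a • projLaw P β + b • projLaw Q β := by
  unfold projLaw
  rw [Measure.map_add _ _ (measurable_inner_right β), Measure.map_smul, Measure.map_smul]

lemma projCDF_nonneg {d : ℕ} (P : Measure (EuclideanSpace ℝ (Fin d)))
    (β : EuclideanSpace ℝ (Fin d)) (t : ℝ) : 0 ≤ projCDF P β t :=
  ENNReal.toReal_nonneg

lemma projCDF_le_one {d : ℕ} (P : Measure (EuclideanSpace ℝ (Fin d)))
    [IsProbabilityMeasure P] (β : EuclideanSpace ℝ (Fin d)) (t : ℝ) :
    projCDF P β t ≤ 1 := by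
  rw [projCDF_eq]
  exact cdfLeOne (projLaw P β) t


/-- Lower bound for the CvM distance, Lemma 4.1: under the continuity
assumption, `W_d(P,Q) ≥ ∫_{S^{d-1}} |1/2 - (P⊗Q){(x,y) : ⟪β,x⟫ ≤ ⟪β,y⟫}| dλ(β)`. -/
theorem stmt5 {d : ℕ} (P Q : Measure (EuclideanSpace ℝ (Fin d)))
    [IsProbabilityMeasure P] [IsProbabilityMeasure Q]
    (hc : ContinuityAssumption P Q) (ϑ : ℝ) (hϑ : ϑ ∈ Set.Ioo (0 : ℝ) 1) :
    (∫ β, |1 / 2 - ((P.prod Q) {z | ⟪β, z.1⟫ ≤ ⟪β, z.2⟫}).toReal| ∂(sphereUniform d))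
      ≤ Real.sqrt (cvmSq ϑ P Q) := by
  obtain ⟨hϑ0, hϑ1⟩ := hϑ
  have h1ϑ : (0:ℝ) ≤ 1 - ϑ := by linarith
  set ρ : Measure (EuclideanSpace ℝ (Fin d)) :=
    ENNReal.ofReal ϑ • P + ENNReal.ofReal (1 - ϑ) • Q with hρdef
  haveI hρprob : IsProbabilityMeasure ρ := by
    constructor
    rw [hρdef]
    simp only [Measure.add_apply, Measure.smul_apply, measure_univ, smul_eq_mul, mul_one]
    rw [← ENNReal.ofReal_add hϑ0.le h1ϑ]
    norm_num
  set u : EuclideanSpace ℝ (Fin d) → ℝ := fun β =>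
    ∫ t, (projCDF P β t - projCDF Q β t) ^ 2 ∂(projLaw ρ β) with hudef
  set c : EuclideanSpace ℝ (Fin d) → ℝ := fun β =>
    |1 / 2 - ((P.prod Q) {z | ⟪β, z.1⟫ ≤ ⟪β, z.2⟫}).toReal| with hcdef
  -- pointwise a.e. bound
  have hae : ∀ᵐ β ∂(sphereUniform d), c β ≤ Real.sqrt (u β) := by
    refine hc.mono fun β hβ => ?_
    obtain ⟨hP, hQ⟩ := hβ
    have key := keyR ϑ hϑ0.le hϑ1.le (projLaw P β) (projLaw Q β) hP hQ
    have hrw1 : ((P.prod Q) {z | ⟪β, z.1⟫ ≤ ⟪β, z.2⟫}).toReal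
        = (((projLaw P β).prod (projLaw Q β)) {p : ℝ × ℝ | p.1 ≤ p.2}).toReal := by
      rw [prodLaw_eq P Q β]
    have hrw2 : u β = ∫ t, (((projLaw P β) (Set.Iic t)).toReal
        - ((projLaw Q β) (Set.Iic t)).toReal) ^ 2
        ∂(ENNReal.ofReal ϑ • projLaw P β + ENNReal.ofReal (1 - ϑ) • projLaw Q β) := by
      rw [hudef]
      simp only
      rw [hρdef, projLaw_mix]
      congr 1
      funext t
      rw [projCDF_eq P β t, projCDF_eq Q β t]
    rw [hcdef]
    simp only
    rw [hrw1, hrw2]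
    exact key
  -- measurability of u
  have hmu : Measurable u := by
    have hmono : ∀ (R : Measure (EuclideanSpace ℝ (Fin d))) (_ : IsFiniteMeasure R) β,
        Measurable fun t => projCDF R β t := by
      intro R hR β
      refine Monotone.measurable fun s t hst => ?_
      exact ENNReal.toReal_mono (measure_ne_top R _)
        (measure_mono fun x hx => le_trans hx hst)
    have hrw : ∀ β, u β = ∫ x, (projCDF P β ⟪β, x⟫ - projCDF Q β ⟪β, x⟫) ^ 2 ∂ρ := by
      intro β
      rw [hudef]
      simp only
      have : projLaw ρ β = ρ.map fun x => ⟪β, x⟫ := rfl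
      rw [this, integral_map (measurable_inner_right β).aemeasurable
        (f := fun t => (projCDF P β t - projCDF Q β t) ^ 2)
        ((((hmono P inferInstance β).sub (hmono Q inferInstance β)).pow_const
          2).aestronglyMeasurable)]
    have hfun : u = fun β => ∫ x, (projCDF P β ⟪β, x⟫ - projCDF Q β ⟪β, x⟫) ^ 2 ∂ρ :=
      funext hrw
    rw [hfun]
    have hS' : MeasurableSet {r : (EuclideanSpace ℝ (Fin d) × EuclideanSpace ℝ (Fin d))
        × EuclideanSpace ℝ (Fin d) | ⟪r.1.1, r.2⟫ ≤ ⟪r.1.1, r.1.2⟫} :=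
      measurableSet_le ((continuous_fst.fst.inner continuous_snd)).measurable
        ((continuous_fst.fst.inner continuous_fst.snd)).measurable
    have hK1 : Measurable fun q : EuclideanSpace ℝ (Fin d) × EuclideanSpace ℝ (Fin d) =>
        projCDF P q.1 ⟪q.1, q.2⟫ :=
      (measurable_measure_prodMk_left (ν := P) hS').ennreal_toReal
    have hK2 : Measurable fun q : EuclideanSpace ℝ (Fin d) × EuclideanSpace ℝ (Fin d) =>
        projCDF Q q.1 ⟪q.1, q.2⟫ :=
      (measurable_measure_prodMk_left (ν := Q) hS').ennreal_toReal
    exact (StronglyMeasurable.integral_prod_right'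
      (((hK1.sub hK2).pow_const 2).stronglyMeasurable)).measurable
  -- bounds on u
  have hu0 : ∀ β, 0 ≤ u β := fun β => integral_nonneg fun t => sq_nonneg _
  have hu1 : ∀ β, u β ≤ 1 := by
    intro β
    haveI : IsProbabilityMeasure (projLaw ρ β) := projLaw_prob ρ β
    have hb : ∀ t : ℝ, (projCDF P β t - projCDF Q β t) ^ 2 ≤ 1 := by
      intro t
      rw [← sq_abs]
      calc |projCDF P β t - projCDF Q β t| ^ 2 ≤ 1 ^ 2 := by
            refine pow_le_pow_left₀ (abs_nonneg _) (abs_le.2 ⟨?_, ?_⟩) 2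
            · linarith [projCDF_nonneg P β t, projCDF_le_one Q β t]
            · linarith [projCDF_le_one P β t, projCDF_nonneg Q β t]
        _ = 1 := one_pow 2
    calc u β ≤ ∫ _, (1:ℝ) ∂(projLaw ρ β) := by
          refine integral_mono_of_nonneg (ae_of_all _ fun t => sq_nonneg _)
            (integrable_const 1) (ae_of_all _ hb)
      _ = 1 := by simp
  -- integrability
  have hmc : Measurable c := by
    have hS'' : MeasurableSet {q : EuclideanSpace ℝ (Fin d) ×
        (EuclideanSpace ℝ (Fin d) × EuclideanSpace ℝ (Fin d)) | ⟪q.1, q.2.1⟫ ≤ ⟪q.1, q.2.2⟫} := by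
      haveI : OpensMeasurableSpace (EuclideanSpace ℝ (Fin d) ×
          (EuclideanSpace ℝ (Fin d) × EuclideanSpace ℝ (Fin d))) := by infer_instance
      exact measurableSet_le ((continuous_fst.inner continuous_snd.fst)).measurable
        ((continuous_fst.inner continuous_snd.snd)).measurable
    exact (measurable_const.sub
      (measurable_measure_prodMk_left (ν := P.prod Q) hS'').ennreal_toReal).abs
  have hcb : ∀ β, |c β| ≤ 2 := by
    intro β
    rw [hcdef, abs_abs]
    have h1 : ((P.prod Q) {z | ⟪β, z.1⟫ ≤ ⟪β, z.2⟫}).toReal ≤ 1 := by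
      simpa using ENNReal.toReal_mono ENNReal.one_ne_top
        (prob_le_one (μ := P.prod Q) (s := {z | ⟪β, z.1⟫ ≤ ⟪β, z.2⟫}))
    have h0 : 0 ≤ ((P.prod Q) {z | ⟪β, z.1⟫ ≤ ⟪β, z.2⟫}).toReal := ENNReal.toReal_nonneg
    rw [abs_le]
    constructor <;> linarith
  have hic : Integrable c (sphereUniform d) := integrable_bdd hmc.aestronglyMeasurable 2 hcb
  have hisu : Integrable (fun β => Real.sqrt (u β)) (sphereUniform d) := by
    refine integrable_bdd (Real.continuous_sqrt.measurable.comp hmu).aestronglyMeasurable 1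
      fun β => ?_
    rw [abs_of_nonneg (Real.sqrt_nonneg _)]
    exact Real.sqrt_le_one.2 (hu1 β)
  have hisu2 : Integrable (fun β => Real.sqrt (u β) ^ 2) (sphereUniform d) := by
    have : (fun β => Real.sqrt (u β) ^ 2) = u := funext fun β => Real.sq_sqrt (hu0 β)
    rw [this]
    exact integrable_bdd hmu.aestronglyMeasurable 1
      fun β => abs_le.2 ⟨by linarith [hu0 β], hu1 β⟩
  -- chain
  have step1 : ∫ β, c β ∂(sphereUniform d) ≤ ∫ β, Real.sqrt (u β) ∂(sphereUniform d) :=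
    integral_mono_ae hic hisu hae
  have step2 : ∫ β, Real.sqrt (u β) ∂(sphereUniform d) ≤ Real.sqrt (cvmSq ϑ P Q) := by
    have hcs := abs_integral_le_sqrt_integral_sq hisu hisu2
    have e1 : ∫ β, Real.sqrt (u β) ^ 2 ∂(sphereUniform d) = cvmSq ϑ P Q := by
      have : (fun β => Real.sqrt (u β) ^ 2) = u := funext fun β => Real.sq_sqrt (hu0 β)
      rw [this]
      rfl
    calc ∫ β, Real.sqrt (u β) ∂(sphereUniform d)
        ≤ |∫ β, Real.sqrt (u β) ∂(sphereUniform d)| := le_abs_self _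
      _ ≤ Real.sqrt (∫ β, Real.sqrt (u β) ^ 2 ∂(sphereUniform d)) := hcs
      _ = Real.sqrt (cvmSq ϑ P Q) := by rw [e1]
  exact le_trans step1 step2
end
end

section
/- Fix c > 0. For integers m, n ≥ 2 and d ≥ 1, let P* be the law on ℝ^d of the random vector (ξ, 0, …, 0) where ξ is Gaussian with mean c·m^{−1/2} and variance 1, and let Q* be the law of (ξ', 0, …, 0) where ξ' is Gaussian with mean −c·n^{−1/2} and variance 1. Then for every weight ϑ ∈ (0,1): (i) there exists a constant C > 0 depending only on c (and not on d, m, n, or ϑ) such that W_d(P*, Q*) ≥ C·(m^{−1/2} + n^{−1/2}); and (ii) W_d(P*, Q*) ≤ (c/√2)·(m^{−1/2} + n^{−1/2}). -/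
open MeasureTheory ProbabilityTheory Real
open scoped RealInnerProductSpace ENNReal BigOperators

noncomputable section

/-- The law on `ℝ^d` of the vector `(ξ, 0, …, 0)` where `ξ ~ N(μ₀, 1)`. -/
def lineGaussian (d : ℕ) (hd : 0 < d) (μ0 : ℝ) : Measure (EuclideanSpace ℝ (Fin d)) :=
  (gaussianReal μ0 1).map fun t => EuclideanSpace.single (⟨0, hd⟩ : Fin d) t

namespace Stmt6Aux

open Set

instance gaussNoAtoms (μ : ℝ) : NullSingletonClass (gaussianReal μ 1) :=
  ⟨fun t => gaussianReal_absolutelyContinuous μ one_ne_zero (measure_singleton t)⟩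

lemma cdf_diff (μ a b : ℝ) (hab : a ≤ b) :
    (gaussianReal μ 1 (Iic b)).toReal - (gaussianReal μ 1 (Iic a)).toReal
      = ∫ x in Ioc a b, gaussianPDFReal μ 1 x := by
  have hdisj : Disjoint (Iic a) (Ioc a b) :=
    disjoint_left.mpr fun x hx hx' => absurd hx (not_le.mpr hx'.1)
  have h1 : gaussianReal μ 1 (Iic b) = gaussianReal μ 1 (Iic a) + gaussianReal μ 1 (Ioc a b) := by
    rw [← measure_union hdisj measurableSet_Ioc, Iic_union_Ioc_eq_Iic hab]
  have h2 : gaussianReal μ 1 (Ioc a b) = ENNReal.ofReal (∫ x in Ioc a b, gaussianPDFReal μ 1 x) :=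
    gaussianReal_apply_eq_integral μ one_ne_zero _
  rw [h1, ENNReal.toReal_add (measure_ne_top _ _) (measure_ne_top _ _), h2,
    ENNReal.toReal_ofReal (setIntegral_nonneg measurableSet_Ioc
      fun x _ => gaussianPDFReal_nonneg μ 1 x)]
  ring

lemma pdf_le (μ x : ℝ) : gaussianPDFReal μ 1 x ≤ (Real.sqrt (2 * π))⁻¹ := by
  rw [gaussianPDFReal]
  simp only [NNReal.coe_one, mul_one]
  have h1 : Real.exp (-(x-μ)^2/2) ≤ 1 := Real.exp_le_one_iff.mpr (by nlinarith [sq_nonneg (x - μ)])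
  calc (Real.sqrt (2*π))⁻¹ * Real.exp (-(x-μ)^2/2) ≤ (Real.sqrt (2*π))⁻¹ * 1 :=
        mul_le_mul_of_nonneg_left h1 (by positivity)
    _ = _ := mul_one _

lemma pdf_ge (μ x M : ℝ) (h : |x - μ| ≤ M) :
    (Real.sqrt (2 * π))⁻¹ * Real.exp (-M ^ 2 / 2) ≤ gaussianPDFReal μ 1 x := by
  rw [gaussianPDFReal]
  simp only [NNReal.coe_one, mul_one]
  have h2 : (x - μ)^2 ≤ M^2 := sq_le_sq' (by linarith [(abs_le.mp h).1]) (abs_le.mp h).2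
  exact mul_le_mul_of_nonneg_left (Real.exp_le_exp.mpr (by linarith)) (by positivity)

lemma int_le (μ a b : ℝ) (hab : a ≤ b) :
    ∫ x in Ioc a b, gaussianPDFReal μ 1 x ≤ (b - a) * (Real.sqrt (2 * π))⁻¹ := by
  have hconst : IntegrableOn (fun _ : ℝ => (Real.sqrt (2*π))⁻¹) (Ioc a b) volume :=
    integrableOn_const (by rw [Real.volume_Ioc]; exact ENNReal.ofReal_ne_top)
  have h := setIntegral_mono_on ((integrable_gaussianPDFReal μ 1).integrableOn)
      hconst measurableSet_Ioc (fun x _ => pdf_le μ x)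
  calc ∫ x in Ioc a b, gaussianPDFReal μ 1 x ≤ ∫ _x in Ioc a b, (Real.sqrt (2*π))⁻¹ := h
    _ = (b - a) * (Real.sqrt (2*π))⁻¹ := by
        rw [setIntegral_const, measureReal_def, Real.volume_Ioc, ENNReal.toReal_ofReal (by linarith), smul_eq_mul]

lemma int_ge (μ a b M : ℝ) (hab : a ≤ b) (h : ∀ x ∈ Icc a b, |x - μ| ≤ M) :
    (b - a) * ((Real.sqrt (2 * π))⁻¹ * Real.exp (-M ^ 2 / 2))
      ≤ ∫ x in Ioc a b, gaussianPDFReal μ 1 x := by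
  have hconst : IntegrableOn (fun _ : ℝ => (Real.sqrt (2*π))⁻¹ * Real.exp (-M^2/2)) (Ioc a b) volume :=
    integrableOn_const (by rw [Real.volume_Ioc]; exact ENNReal.ofReal_ne_top)
  have h' := setIntegral_mono_on hconst
      ((integrable_gaussianPDFReal μ 1).integrableOn)
      measurableSet_Ioc (fun x hx => pdf_ge μ x M (h x (Ioc_subset_Icc_self hx)))
  calc (b - a) * ((Real.sqrt (2*π))⁻¹ * Real.exp (-M^2/2))
      = ∫ _x in Ioc a b, (Real.sqrt (2*π))⁻¹ * Real.exp (-M^2/2) := by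
        rw [setIntegral_const, measureReal_def, Real.volume_Ioc, ENNReal.toReal_ofReal (by linarith), smul_eq_mul]
    _ ≤ _ := h'

lemma cdf_translate (μ t : ℝ) : gaussianReal μ 1 (Iic t) = gaussianReal 0 1 (Iic (t - μ)) := by
  have h : (gaussianReal 0 1).map (· + μ) = gaussianReal μ 1 := by
    rw [gaussianReal_map_add_const μ, zero_add]
  rw [← h, Measure.map_apply (measurable_add_const μ) measurableSet_Iic,
    preimage_add_const_Iic]

variable {d : ℕ}

lemma continuous_single' (e : Fin d) : Continuous (fun t : ℝ => EuclideanSpace.single e t) := by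
  have : (fun t : ℝ => EuclideanSpace.single e t)
      = fun t : ℝ => t • EuclideanSpace.single e (1:ℝ) := by
    funext t; ext j; simp [EuclideanSpace.single_apply, mul_ite]
  rw [this]; exact continuous_id.smul continuous_const

lemma measurable_single (e : Fin d) : Measurable (fun t : ℝ => EuclideanSpace.single e t) :=
  (continuous_single' e).measurable

instance lineGaussian_prob (hd : 0 < d) (μ0 : ℝ) : IsProbabilityMeasure (lineGaussian d hd μ0) :=
  Measure.isProbabilityMeasure_map (measurable_single _).aemeasurable

lemma measurable_inner_left (β : EuclideanSpace ℝ (Fin d)) :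
    Measurable (fun x : EuclideanSpace ℝ (Fin d) => ⟪β, x⟫) :=
  (continuous_const.inner continuous_id).measurable

lemma projCDF_lineGaussian (hd : 0 < d) (μ0 : ℝ) (β : EuclideanSpace ℝ (Fin d)) (t : ℝ) :
    projCDF (lineGaussian d hd μ0) β t
      = (gaussianReal μ0 1 {s : ℝ | β ⟨0, hd⟩ * s ≤ t}).toReal := by
  rw [projCDF, lineGaussian,
    Measure.map_apply (measurable_single _)
      (measurableSet_le (measurable_inner_left β) measurable_const)]
  congr 2
  ext s
  simp only [mem_preimage, mem_setOf_eq]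
  rw [EuclideanSpace.inner_single_right]
  simp [mul_comm]

lemma proj_lineGaussian (hd : 0 < d) (μ0 : ℝ) (β : EuclideanSpace ℝ (Fin d)) :
    (lineGaussian d hd μ0).map (fun x => ⟪β, x⟫)
      = (gaussianReal μ0 1).map (fun s => β ⟨0, hd⟩ * s) := by
  rw [lineGaussian, Measure.map_map (measurable_inner_left β) (measurable_single _)]
  congr 1
  funext s
  simp only [Function.comp_apply]
  rw [EuclideanSpace.inner_single_right]
  simp [mul_comm]

lemma cdf_Ici (μ0 s : ℝ) :
    (gaussianReal μ0 1 (Ici s)).toReal = 1 - (gaussianReal μ0 1 (Iic s)).toReal := by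
  have h1 : gaussianReal μ0 1 (Ici s) = 1 - gaussianReal μ0 1 (Iio s) := by
    rw [← compl_Iio]
    exact prob_compl_eq_one_sub measurableSet_Iio
  have h2 : gaussianReal μ0 1 (Iio s) = gaussianReal μ0 1 (Iic s) :=
    measure_congr Iio_ae_eq_Iic
  rw [h1, h2, ENNReal.toReal_sub_of_le prob_le_one ENNReal.one_ne_top, ENNReal.toReal_one]

lemma monotone_projCDF {P : Measure (EuclideanSpace ℝ (Fin d))} [IsProbabilityMeasure P]
    (β : EuclideanSpace ℝ (Fin d)) : Monotone (projCDF P β) := by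
  intro t t' h
  exact ENNReal.toReal_mono (measure_ne_top _ _)
    (measure_mono fun x hx => le_trans hx h)

lemma key_inner (hd : 0 < d) (μ ν ϑ : ℝ) (β : EuclideanSpace ℝ (Fin d))
    (hb : β ⟨0, hd⟩ ≠ 0) :
    (∫ t, (projCDF (lineGaussian d hd μ) β t - projCDF (lineGaussian d hd ν) β t) ^ 2
        ∂(projLaw (ENNReal.ofReal ϑ • lineGaussian d hd μ
            + ENNReal.ofReal (1 - ϑ) • lineGaussian d hd ν) β))
      = ∫ s, ((gaussianReal μ 1 (Iic s)).toReal - (gaussianReal ν 1 (Iic s)).toReal) ^ 2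
          ∂(ENNReal.ofReal ϑ • gaussianReal μ 1 + ENNReal.ofReal (1 - ϑ) • gaussianReal ν 1) := by
  set e : Fin d := ⟨0, hd⟩
  set b : ℝ := β e with hb_def
  set P := lineGaussian d hd μ
  set Q := lineGaussian d hd ν
  set ρ : Measure ℝ :=
    ENNReal.ofReal ϑ • gaussianReal μ 1 + ENNReal.ofReal (1 - ϑ) • gaussianReal ν 1
  have hmix : projLaw (ENNReal.ofReal ϑ • P + ENNReal.ofReal (1 - ϑ) • Q) β
      = ρ.map (fun s => b * s) := by
    rw [projLaw, Measure.map_add _ _ (measurable_inner_left β),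
      Measure.map_smul, Measure.map_smul, proj_lineGaussian hd μ β, proj_lineGaussian hd ν β,
      Measure.map_add _ _ (measurable_const_mul b), Measure.map_smul, Measure.map_smul]
  rw [hmix]
  have hmono1 := monotone_projCDF (P := P) β
  have hmono2 := monotone_projCDF (P := Q) β
  have hFm : AEStronglyMeasurable
      (fun t => (projCDF P β t - projCDF Q β t) ^ 2) (ρ.map (fun s => b * s)) :=
    ((hmono1.measurable.sub hmono2.measurable).pow_const 2).aestronglyMeasurable
  rw [integral_map (measurable_const_mul b).aemeasurable hFm]
  refine integral_congr_ae (ae_of_all _ fun s => ?_)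
  show (projCDF P β (b * s) - projCDF Q β (b * s)) ^ 2 = _
  rw [projCDF_lineGaussian hd μ β, projCDF_lineGaussian hd ν β]
  rcases hb.lt_or_gt with hneg | hpos
  · have hset : {y : ℝ | b * y ≤ b * s} = Ici s := by
      ext y
      simp only [mem_setOf_eq, mem_Ici]
      exact mul_le_mul_left_of_neg hneg
    rw [hset, cdf_Ici, cdf_Ici]
    ring
  · have hset : {y : ℝ | b * y ≤ b * s} = Iic s := by
      ext y
      simp only [mem_setOf_eq, mem_Iic]
      exact mul_le_mul_iff_of_pos_left hpos
    rw [hset]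

lemma measurable_normalize :
    Measurable (fun x : EuclideanSpace ℝ (Fin d) => ‖x‖⁻¹ • x) :=
  measurable_norm.inv.smul measurable_id

instance stdGaussian_prob : IsProbabilityMeasure (stdGaussian d) :=
  Measure.isProbabilityMeasure_map
    (EuclideanSpace.equiv (Fin d) ℝ).symm.continuous.measurable.aemeasurable

instance sphereUniform_prob : IsProbabilityMeasure (sphereUniform d) :=
  Measure.isProbabilityMeasure_map measurable_normalize.aemeasurable

lemma measurable_eval (e : Fin d) :
    Measurable (fun β : EuclideanSpace ℝ (Fin d) => β e) :=
  (EuclideanSpace.proj (𝕜 := ℝ) e).continuous.measurable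

lemma sphere_coord_ne_zero (e : Fin d) :
    ∀ᵐ β ∂(sphereUniform d), β e ≠ 0 := by
  rw [ae_iff]
  simp only [not_not]
  have hset : MeasurableSet {β : EuclideanSpace ℝ (Fin d) | β e = 0} :=
    measurableSet_eq_fun (measurable_eval e) measurable_const
  rw [sphereUniform, Measure.map_apply measurable_normalize hset]
  have hsub : (fun x : EuclideanSpace ℝ (Fin d) => ‖x‖⁻¹ • x) ⁻¹'
      {β | β e = 0} ⊆ {x | x e = 0} := by
    intro x hx
    simp only [mem_preimage, mem_setOf_eq, PiLp.smul_apply, smul_eq_mul] at hx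
    rcases mul_eq_zero.mp hx with h | h
    · have h0 : ‖x‖ = 0 := inv_eq_zero.mp h
      have h1 : x = 0 := norm_eq_zero.mp h0
      simp [h1]
    · exact h
  refine measure_mono_null hsub ?_
  rw [_root_.stdGaussian, Measure.map_apply
    (EuclideanSpace.equiv (Fin d) ℝ).symm.continuous.measurable
    (measurableSet_eq_fun (measurable_eval e) measurable_const)]
  have hpre : ⇑(EuclideanSpace.equiv (Fin d) ℝ).symm ⁻¹' {x | x e = 0}
      = {y : Fin d → ℝ | y e = 0} := by
    ext y
    simp [mem_preimage, mem_setOf_eq]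
  rw [hpre]
  exact Measure.pi_hyperplane _ e 0

lemma cvmSq_eq (hd : 0 < d) (μ ν ϑ : ℝ) :
    cvmSq ϑ (lineGaussian d hd μ) (lineGaussian d hd ν)
      = ∫ s, ((gaussianReal μ 1 (Iic s)).toReal - (gaussianReal ν 1 (Iic s)).toReal) ^ 2
          ∂(ENNReal.ofReal ϑ • gaussianReal μ 1 + ENNReal.ofReal (1 - ϑ) • gaussianReal ν 1) := by
  rw [cvmSq]
  have hae := sphere_coord_ne_zero (⟨0, hd⟩ : Fin d)
  rw [integral_congr_ae (hae.mono fun β hb => key_inner hd μ ν ϑ β hb), integral_const,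
    measureReal_def, measure_univ, ENNReal.toReal_one, one_smul]

lemma mix_prob {ϑ : ℝ} (hϑ : ϑ ∈ Set.Ioo (0:ℝ) 1) (μ1 μ2 : ℝ) :
    IsProbabilityMeasure
      (ENNReal.ofReal ϑ • gaussianReal μ1 1 + ENNReal.ofReal (1 - ϑ) • gaussianReal μ2 1) := by
  constructor
  simp only [Measure.add_apply, Measure.smul_apply, smul_eq_mul, measure_univ, mul_one]
  rw [← ENNReal.ofReal_add hϑ.1.le (by linarith [hϑ.2])]
  norm_num

lemma mix_toReal {ϑ : ℝ} (hϑ : ϑ ∈ Set.Ioo (0:ℝ) 1) (μ1 μ2 : ℝ) (s : Set ℝ) :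
    ((ENNReal.ofReal ϑ • gaussianReal μ1 1 + ENNReal.ofReal (1 - ϑ) • gaussianReal μ2 1) s).toReal
      = ϑ * (gaussianReal μ1 1 s).toReal + (1 - ϑ) * (gaussianReal μ2 1 s).toReal := by
  rw [Measure.add_apply, Measure.smul_apply, Measure.smul_apply, smul_eq_mul, smul_eq_mul,
    ENNReal.toReal_add (ENNReal.mul_ne_top ENNReal.ofReal_ne_top (measure_ne_top _ _))
      (ENNReal.mul_ne_top ENNReal.ofReal_ne_top (measure_ne_top _ _)),
    ENNReal.toReal_mul, ENNReal.toReal_mul,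
    ENNReal.toReal_ofReal hϑ.1.le, ENNReal.toReal_ofReal (by linarith [hϑ.2])]

lemma cdf_le_one (μ0 : ℝ) (s : Set ℝ) : (gaussianReal μ0 1 s).toReal ≤ 1 := by
  have := ENNReal.toReal_mono ENNReal.one_ne_top (prob_le_one (μ := gaussianReal μ0 1) (s := s))
  simpa using this

lemma gauss_Icc_ge (μ0 M : ℝ) (h : ∀ x ∈ Icc (-1:ℝ) 1, |x - μ0| ≤ M) :
    2 * ((Real.sqrt (2 * π))⁻¹ * Real.exp (-M ^ 2 / 2))
      ≤ (gaussianReal μ0 1 (Icc (-1) 1)).toReal := by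
  have h1 : (gaussianReal μ0 1 (Ioc (-1:ℝ) 1)).toReal
      = ∫ x in Ioc (-1:ℝ) 1, gaussianPDFReal μ0 1 x := by
    rw [gaussianReal_apply_eq_integral μ0 one_ne_zero,
      ENNReal.toReal_ofReal (setIntegral_nonneg measurableSet_Ioc
        fun x _ => gaussianPDFReal_nonneg μ0 1 x)]
  have h2 := int_ge μ0 (-1) 1 M (by norm_num) h
  have h3 : (gaussianReal μ0 1 (Ioc (-1:ℝ) 1)).toReal
      ≤ (gaussianReal μ0 1 (Icc (-1:ℝ) 1)).toReal :=
    ENNReal.toReal_mono (measure_ne_top _ _) (measure_mono Ioc_subset_Icc_self)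
  have h4 : (1:ℝ) - (-1) = 2 := by norm_num
  rw [h4] at h2
  rw [h1] at h3
  linarith

lemma measurable_cdf (μ0 : ℝ) : Measurable (fun s => (gaussianReal μ0 1 (Iic s)).toReal) := by
  have hmono : Monotone (fun s => (gaussianReal μ0 1 (Iic s)).toReal) := fun t t' h =>
    ENNReal.toReal_mono (measure_ne_top _ _) (measure_mono (Iic_subset_Iic.mpr h))
  exact hmono.measurable

end Stmt6Aux

open Stmt6Aux Set in
set_option maxHeartbeats 2000000 in
/-- Lemma 4.2: with `P* = law of (ξ,0,…,0)`, `ξ ~ N(c m^{-1/2},1)` and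
`Q* = law of (ξ',0,…,0)`, `ξ' ~ N(-c n^{-1/2},1)`, for every `ϑ ∈ (0,1)` one has
`W_d(P*,Q*) ≥ C (m^{-1/2} + n^{-1/2})` for a constant `C > 0` depending only on `c`,
and `W_d(P*,Q*) ≤ (c/√2)(m^{-1/2} + n^{-1/2})`. -/
theorem stmt6 (c : ℝ) (hc : 0 < c) :
    ∃ C : ℝ, 0 < C ∧
      ∀ (d m n : ℕ) (hd : 0 < d), 2 ≤ m → 2 ≤ n → ∀ ϑ : ℝ, ϑ ∈ Set.Ioo (0 : ℝ) 1 →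
        C * (1 / Real.sqrt m + 1 / Real.sqrt n)
            ≤ Real.sqrt (cvmSq ϑ (lineGaussian d hd (c / Real.sqrt m))
                (lineGaussian d hd (-(c / Real.sqrt n)))) ∧
          Real.sqrt (cvmSq ϑ (lineGaussian d hd (c / Real.sqrt m))
                (lineGaussian d hd (-(c / Real.sqrt n))))
            ≤ (c / Real.sqrt 2) * (1 / Real.sqrt m + 1 / Real.sqrt n) := by
  set K : ℝ := (Real.sqrt (2 * π))⁻¹ * Real.exp (-(1 + c) ^ 2 / 2) with hK_def
  have hKpos : 0 < K := by positivity
  refine ⟨c * (K * Real.sqrt (2 * K)), by positivity, ?_⟩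
  intro d m n hd hm hn ϑ hϑ
  set μ := c / Real.sqrt m with hμ_def
  set ν := c / Real.sqrt n with hν_def
  have hm1 : (1:ℝ) ≤ Real.sqrt m := by
    rw [show (1:ℝ) = Real.sqrt 1 by simp]
    exact Real.sqrt_le_sqrt (by exact_mod_cast le_trans one_le_two hm)
  have hn1 : (1:ℝ) ≤ Real.sqrt n := by
    rw [show (1:ℝ) = Real.sqrt 1 by simp]
    exact Real.sqrt_le_sqrt (by exact_mod_cast le_trans one_le_two hn)
  have hμpos : 0 < μ := div_pos hc (lt_of_lt_of_le one_pos hm1)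
  have hνpos : 0 < ν := div_pos hc (lt_of_lt_of_le one_pos hn1)
  have hμc : μ ≤ c := by
    rw [hμ_def, div_le_iff₀ (lt_of_lt_of_le one_pos hm1)]
    nlinarith
  have hνc : ν ≤ c := by
    rw [hν_def, div_le_iff₀ (lt_of_lt_of_le one_pos hn1)]
    nlinarith
  have hsum : μ + ν = c * (1 / Real.sqrt m + 1 / Real.sqrt n) := by
    rw [hμ_def, hν_def, mul_add, mul_one_div, mul_one_div]
  set ρ : Measure ℝ :=
    ENNReal.ofReal ϑ • gaussianReal μ 1 + ENNReal.ofReal (1 - ϑ) • gaussianReal (-ν) 1 with hρ_def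
  haveI : IsProbabilityMeasure ρ := mix_prob hϑ μ (-ν)
  set Δ : ℝ → ℝ :=
    fun s => (gaussianReal μ 1 (Iic s)).toReal - (gaussianReal (-ν) 1 (Iic s)).toReal with hΔ_def
  have hcvm : cvmSq ϑ (lineGaussian d hd μ) (lineGaussian d hd (-ν)) = ∫ s, Δ s ^ 2 ∂ρ :=
    cvmSq_eq hd μ (-ν) ϑ
  -- Δ s = -(∫ pdf over Ioc (s-μ) (s+ν))
  have hΔ_int : ∀ s : ℝ, Δ s = -(∫ x in Ioc (s - μ) (s + ν), gaussianPDFReal 0 1 x) := by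
    intro s
    rw [hΔ_def]
    simp only
    rw [cdf_translate μ s, cdf_translate (-ν) s, sub_neg_eq_add,
      ← cdf_diff 0 (s - μ) (s + ν) (by linarith)]
    ring
  -- pointwise upper bound
  have hΔ_ub : ∀ s : ℝ, Δ s ^ 2 ≤ ((μ + ν) * (Real.sqrt (2 * π))⁻¹) ^ 2 := by
    intro s
    rw [hΔ_int s, neg_sq]
    have h0 : 0 ≤ ∫ x in Ioc (s - μ) (s + ν), gaussianPDFReal 0 1 x :=
      setIntegral_nonneg measurableSet_Ioc fun x _ => gaussianPDFReal_nonneg 0 1 x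
    have h1 := int_le 0 (s - μ) (s + ν) (by linarith)
    have h2 : (s + ν) - (s - μ) = μ + ν := by ring
    rw [h2] at h1
    exact pow_le_pow_left₀ h0 h1 2
  -- pointwise lower bound on Icc (-1) 1
  have hΔ_lb : ∀ s ∈ Icc (-1:ℝ) 1, ((μ + ν) * K) ^ 2 ≤ Δ s ^ 2 := by
    intro s hs
    rw [hΔ_int s, neg_sq]
    have h1 := int_ge 0 (s - μ) (s + ν) (1 + c) (by linarith) ?_
    · have h2 : (s + ν) - (s - μ) = μ + ν := by ring
      rw [h2] at h1
      refine pow_le_pow_left₀ (by positivity) ?_ 2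
      exact h1
    · intro x hx
      have h5 := hx.1
      have h6 := hx.2
      have h7 := hs.1
      have h8 := hs.2
      rw [sub_zero, abs_le]
      exact ⟨by linarith, by linarith⟩
  -- integrability of Δ²
  have hΔmeas : Measurable (fun s => Δ s ^ 2) :=
    ((measurable_cdf μ).sub (measurable_cdf (-ν))).pow_const 2
  have hΔbdd : ∀ s : ℝ, ‖Δ s ^ 2‖ ≤ 1 := by
    intro s
    rw [Real.norm_eq_abs, abs_of_nonneg (sq_nonneg _)]
    have h1 : 0 ≤ (gaussianReal μ 1 (Iic s)).toReal := ENNReal.toReal_nonneg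
    have h2 : (gaussianReal μ 1 (Iic s)).toReal ≤ 1 := cdf_le_one μ _
    have h3 : 0 ≤ (gaussianReal (-ν) 1 (Iic s)).toReal := ENNReal.toReal_nonneg
    have h4 : (gaussianReal (-ν) 1 (Iic s)).toReal ≤ 1 := cdf_le_one (-ν) _
    rw [hΔ_def]
    simp only
    nlinarith
  have hInt : Integrable (fun s => Δ s ^ 2) ρ :=
    Integrable.mono' (integrable_const 1) hΔmeas.aestronglyMeasurable (ae_of_all _ hΔbdd)
  -- upper bound on the integral
  have hIub : ∫ s, Δ s ^ 2 ∂ρ ≤ ((μ + ν) * (Real.sqrt (2 * π))⁻¹) ^ 2 := by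
    calc ∫ s, Δ s ^ 2 ∂ρ ≤ ∫ _s, ((μ + ν) * (Real.sqrt (2 * π))⁻¹) ^ 2 ∂ρ :=
          integral_mono hInt (integrable_const _) hΔ_ub
      _ = ((μ + ν) * (Real.sqrt (2 * π))⁻¹) ^ 2 := by
          rw [integral_const, measureReal_def, measure_univ, ENNReal.toReal_one, one_smul]
  -- mass of Icc (-1) 1 under ρ
  have hmass : 2 * K ≤ (ρ (Icc (-1:ℝ) 1)).toReal := by
    rw [hρ_def, mix_toReal hϑ μ (-ν)]
    have h1 : 2 * K ≤ (gaussianReal μ 1 (Icc (-1:ℝ) 1)).toReal := by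
      refine gauss_Icc_ge μ (1 + c) ?_
      intro x hx
      rw [abs_le]
      constructor <;> nlinarith [hx.1, hx.2]
    have h2 : 2 * K ≤ (gaussianReal (-ν) 1 (Icc (-1:ℝ) 1)).toReal := by
      refine gauss_Icc_ge (-ν) (1 + c) ?_
      intro x hx
      rw [abs_le]
      constructor <;> nlinarith [hx.1, hx.2]
    nlinarith [hϑ.1, hϑ.2]
  -- lower bound on the integral
  have hIlb : ((μ + ν) * K) ^ 2 * (2 * K) ≤ ∫ s, Δ s ^ 2 ∂ρ := by
    have h1 : ((μ + ν) * K) ^ 2 * (ρ (Icc (-1:ℝ) 1)).toReal ≤ ∫ s in Icc (-1:ℝ) 1, Δ s ^ 2 ∂ρ :=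
      by have := setIntegral_ge_of_const_le measurableSet_Icc (measure_ne_top _ _) hΔ_lb hInt.integrableOn
         rw [smul_eq_mul, measureReal_def] at this; linarith
    have h2 : ∫ s in Icc (-1:ℝ) 1, Δ s ^ 2 ∂ρ ≤ ∫ s, Δ s ^ 2 ∂ρ :=
      setIntegral_le_integral hInt (ae_of_all _ fun s => sq_nonneg _)
    have h3 : ((μ + ν) * K) ^ 2 * (2 * K) ≤ ((μ + ν) * K) ^ 2 * (ρ (Icc (-1:ℝ) 1)).toReal :=
      mul_le_mul_of_nonneg_left hmass (sq_nonneg _)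
    linarith
  rw [hcvm]
  have hs_nonneg : 0 ≤ 1 / Real.sqrt m + 1 / Real.sqrt n := by positivity
  constructor
  · -- lower bound
    have hsq : (c * (K * Real.sqrt (2 * K)) * (1 / Real.sqrt m + 1 / Real.sqrt n)) ^ 2
        = ((μ + ν) * K) ^ 2 * (2 * K) := by
      have h2K : Real.sqrt (2 * K) ^ 2 = 2 * K := Real.sq_sqrt (by positivity)
      have hrw : (c * (K * Real.sqrt (2 * K)) * (1 / Real.sqrt m + 1 / Real.sqrt n)) ^ 2
          = (c * (1 / Real.sqrt m + 1 / Real.sqrt n)) ^ 2 * K ^ 2 * Real.sqrt (2 * K) ^ 2 := by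
        ring
      rw [hrw, h2K, ← hsum]
      ring
    have h1 : Real.sqrt ((c * (K * Real.sqrt (2 * K)) * (1 / Real.sqrt m + 1 / Real.sqrt n)) ^ 2)
        ≤ Real.sqrt (∫ s, Δ s ^ 2 ∂ρ) := Real.sqrt_le_sqrt (by rw [hsq]; exact hIlb)
    rwa [Real.sqrt_sq (by positivity)] at h1
  · -- upper bound
    have h1 : Real.sqrt (∫ s, Δ s ^ 2 ∂ρ)
        ≤ Real.sqrt (((μ + ν) * (Real.sqrt (2 * π))⁻¹) ^ 2) := Real.sqrt_le_sqrt hIub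
    rw [Real.sqrt_sq (by positivity)] at h1
    have h2 : (Real.sqrt (2 * π))⁻¹ ≤ (Real.sqrt 2)⁻¹ := by
      apply inv_anti₀ (Real.sqrt_pos.mpr (by norm_num))
      exact Real.sqrt_le_sqrt (by nlinarith [Real.pi_gt_three])
    have h3 : (μ + ν) * (Real.sqrt (2 * π))⁻¹ ≤ (μ + ν) * (Real.sqrt 2)⁻¹ :=
      mul_le_mul_of_nonneg_left h2 (by positivity)
    have h4 : (μ + ν) * (Real.sqrt 2)⁻¹
        = (c / Real.sqrt 2) * (1 / Real.sqrt m + 1 / Real.sqrt n) := by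
      rw [hsum, div_eq_mul_inv]
      ring
    linarith

end
end

section
/- For every α ∈ (0,1) and ζ ∈ (0, 1−α) there exists a constant b > 0 depending only on α and ζ with the following property: for all integers d ≥ 1, m, n ≥ 2, every weight ϑ ∈ (0,1), and every Borel set A ⊆ (ℝ^d)^m × (ℝ^d)^n (a rejection region) such that (P^{⊗m} ⊗ P^{⊗n})(A) ≤ α for every Borel probability measure P on ℝ^d, there exist Borel probability measures P_X, P_Y on ℝ^d with W_d(P_X, P_Y) ≥ b·(m^{−1/2} + n^{−1/2}) and (P_X^{⊗m} ⊗ P_Y^{⊗n})(complement of A) ≥ ζ. In words: no level-α test can have worst-case type II error below ζ against alternatives separated by b·(m^{−1/2}+n^{−1/2}) in Cramér–von Mises distance, uniformly over the dimension d. -/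
open MeasureTheory ProbabilityTheory Real
open scoped RealInnerProductSpace ENNReal BigOperators

noncomputable section

/-- The joint law `P^{⊗m} ⊗ Q^{⊗n}` of two independent i.i.d. samples of sizes `m` and `n`. -/
def sampleLaw {d : ℕ} (m n : ℕ) (P Q : Measure (EuclideanSpace ℝ (Fin d)))
    (hP : IsProbabilityMeasure P) (hQ : IsProbabilityMeasure Q) :
    Measure ((Fin m → EuclideanSpace ℝ (Fin d)) × (Fin n → EuclideanSpace ℝ (Fin d))) :=
  haveI := hP; haveI := hQ
  (Measure.pi fun _ : Fin m => P).prod (Measure.pi fun _ : Fin n => Q)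


set_option maxHeartbeats 1000000

/-! ### Auxiliary constructions -/

/-- value of the perturbed Bernoulli -/
def pv (a : ℝ) (b : Bool) : ℝ := if b then 1/2 - a else 1/2 + a

lemma sum_prod_eq (m : ℕ) (f : Bool → ℝ) :
    ∑ s : Fin m → Bool, ∏ i, f (s i) = (∑ b, f b) ^ m := by
  classical
  rw [show (∑ b, f b) ^ m = ∏ _i : Fin m, (∑ b, f b) from by
    rw [Finset.prod_const, Finset.card_univ, Fintype.card_fin]]
  rw [Finset.prod_univ_sum (fun _ : Fin m => (Finset.univ : Finset Bool)) (fun _ b => f b),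
    Fintype.piFinset_univ]

lemma chiSq_l1_bound (m : ℕ) (a : ℝ) :
    ∑ s : Fin m → Bool, |(∏ i, pv a (s i)) - (1/2) ^ m|
      ≤ Real.sqrt (Real.exp (4 * m * a ^ 2) - 1) := by
  classical
  set p : (Fin m → Bool) → ℝ := fun s => ∏ i, pv a (s i) with hp
  have h21 : (2:ℝ)^m * (1/2)^m = 1 := by rw [← mul_pow]; norm_num
  have hsum_p : ∑ s : Fin m → Bool, p s = 1 := by
    rw [hp, sum_prod_eq]
    have : ∑ b, pv a b = 1 := by simp [pv]; ring
    rw [this, one_pow]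
  have hsum_p2 : ∑ s : Fin m → Bool, p s ^ 2 = (1/2 + 2 * a^2) ^ m := by
    have h := sum_prod_eq m (fun b => pv a b ^ 2)
    have hb : (∑ b, pv a b ^ 2) = 1/2 + 2*a^2 := by simp [pv]; ring
    rw [hb] at h
    rw [hp]
    simp_rw [← Finset.prod_pow]
    exact h
  have key : (∑ s : Fin m → Bool, |p s - (1/2)^m|) ^ 2 ≤ (1 + 4 * a ^ 2) ^ m - 1 := by
    have cs := Finset.sum_mul_sq_le_sq_mul_sq Finset.univ (fun _ : Fin m → Bool => (1:ℝ))
      (fun s => |p s - (1/2)^m|)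
    simp only [one_mul, one_pow, sq_abs] at cs
    have h1 : (∑ _s : Fin m → Bool, (1:ℝ)) = 2 ^ m := by
      rw [Finset.sum_const]; simp [Fintype.card_fun]
    have h2 : ∑ s : Fin m → Bool, (p s - (1/2)^m) ^ 2
        = (1/2 + 2*a^2) ^ m - 2 * (1/2)^m + (2:ℝ)^m * ((1/2)^m)^2 := by
      have e : ∀ s : Fin m → Bool, (p s - (1/2)^m)^2
          = p s ^ 2 - (2*(1/2)^m) * p s + ((1/2)^m)^2 := by intro s; ring
      simp_rw [e, Finset.sum_add_distrib, Finset.sum_sub_distrib, hsum_p2, ← Finset.mul_sum,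
        hsum_p, Finset.sum_const]
      simp [Fintype.card_fun]
    calc (∑ s : Fin m → Bool, |p s - (1/2)^m|) ^ 2
        ≤ (∑ _s : Fin m → Bool, (1:ℝ)) * ∑ s : Fin m → Bool, (p s - (1/2)^m) ^ 2 := cs
      _ = 2^m * ((1/2 + 2*a^2) ^ m - 2 * (1/2)^m + (2:ℝ)^m * ((1/2)^m)^2) := by rw [h1, h2]
      _ = (1 + 4 * a ^ 2) ^ m - 1 := by
          have h3 : ((2:ℝ))^m * (1/2 + 2*a^2)^m = (1 + 4*a^2)^m := by
            rw [← mul_pow]; norm_num; ring_nf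
          nlinarith [h21, h3, sq_nonneg ((2:ℝ)^m)]
  have hexp : (1 + 4 * a ^ 2) ^ m - 1 ≤ Real.exp (4 * m * a ^ 2) - 1 := by
    have h1 : (1 + 4*a^2) ≤ Real.exp (4 * a^2) := by
      have := Real.add_one_le_exp (4*a^2); linarith
    have h2 : (1 + 4*a^2)^m ≤ (Real.exp (4*a^2))^m :=
      pow_le_pow_left₀ (by positivity) h1 m
    rw [← Real.exp_nat_mul] at h2
    have e : (m : ℝ) * (4 * a^2) = 4 * m * a^2 := by ring
    rw [e] at h2
    linarith
  have hnn : 0 ≤ ∑ s : Fin m → Bool, |p s - (1/2)^m| :=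
    Finset.sum_nonneg fun s _ => abs_nonneg _
  calc ∑ s : Fin m → Bool, |p s - (1/2)^m|
      = Real.sqrt ((∑ s : Fin m → Bool, |p s - (1/2)^m|)^2) := (Real.sqrt_sq hnn).symm
    _ ≤ Real.sqrt (Real.exp (4 * m * a ^ 2) - 1) := Real.sqrt_le_sqrt (by linarith)

def bmeas (a : ℝ) : Measure Bool :=
  ENNReal.ofReal (1/2 + a) • Measure.dirac false + ENNReal.ofReal (1/2 - a) • Measure.dirac true

lemma bmeas_singleton (a : ℝ) (b : Bool) :
    bmeas a {b} = ENNReal.ofReal (pv a b) := by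
  cases b <;>
    simp [bmeas, pv, Measure.dirac_apply, Set.indicator, Measure.add_apply, Measure.smul_apply]

lemma isProbabilityMeasure_bmeas (a : ℝ) (ha : |a| ≤ 1/2) : IsProbabilityMeasure (bmeas a) := by
  rw [abs_le] at ha
  constructor
  simp only [bmeas, Measure.add_apply, Measure.smul_apply, measure_univ, smul_eq_mul, mul_one]
  rw [← ENNReal.ofReal_add (by linarith [ha.1, ha.2]) (by linarith [ha.1, ha.2])]
  norm_num

lemma pi_bmeas_singleton (m : ℕ) (a : ℝ) (ha : |a| ≤ 1/2) (s : Fin m → Bool) :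
    haveI := isProbabilityMeasure_bmeas a ha
    ((Measure.pi fun _ : Fin m => bmeas a) {s}).toReal = ∏ i, pv a (s i) := by
  haveI := isProbabilityMeasure_bmeas a ha
  rw [← Set.univ_pi_singleton s, Measure.pi_pi]
  rw [ENNReal.toReal_prod]
  refine Finset.prod_congr rfl fun i _ => ?_
  rw [bmeas_singleton a, ENNReal.toReal_ofReal]
  rw [abs_le] at ha
  cases s i <;> simp [pv] <;> linarith [ha.1, ha.2]

open scoped Classical in
/-- measure of any set in a finite space equals sum of atoms -/
lemma meas_eq_sum {Ω : Type*} [Fintype Ω] [MeasurableSpace Ω] [MeasurableSingletonClass Ω]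
    (μ : Measure Ω) (B : Set Ω) : μ B = ∑ x ∈ Finset.univ.filter (· ∈ B), μ {x} := by
  have hB : B = ⋃ x ∈ Finset.univ.filter (· ∈ B), ({x} : Set Ω) := by
    ext y; simp
  have hd : (↑(Finset.univ.filter (· ∈ B)) : Set Ω).PairwiseDisjoint (fun x => ({x} : Set Ω)) := by
    intro x _ y _ hxy
    simp [Function.onFun, Set.disjoint_singleton, hxy]
  have h := measure_biUnion_finset (μ := μ) hd (fun b _ => measurableSet_singleton b)
  rw [← hB] at h
  exact h

lemma meas_compare {Ω : Type*} [Fintype Ω] [MeasurableSpace Ω] [MeasurableSingletonClass Ω]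
    (μ ν : Measure Ω) [IsFiniteMeasure μ] [IsFiniteMeasure ν] (B : Set Ω) :
    (μ B).toReal - ∑ x : Ω, |(μ {x}).toReal - (ν {x}).toReal| ≤ (ν B).toReal := by
  classical
  have h1 : (μ B).toReal = ∑ x ∈ Finset.univ.filter (· ∈ B), (μ {x}).toReal := by
    rw [meas_eq_sum, ENNReal.toReal_sum]; exact fun x _ => measure_ne_top μ _
  have h2 : (ν B).toReal = ∑ x ∈ Finset.univ.filter (· ∈ B), (ν {x}).toReal := by
    rw [meas_eq_sum, ENNReal.toReal_sum]; exact fun x _ => measure_ne_top ν _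
  rw [h1, h2]
  have h3 : ∑ x ∈ Finset.univ.filter (· ∈ B), ((μ {x}).toReal - (ν {x}).toReal)
      ≤ ∑ x : Ω, |(μ {x}).toReal - (ν {x}).toReal| := by
    calc ∑ x ∈ Finset.univ.filter (· ∈ B), ((μ {x}).toReal - (ν {x}).toReal)
        ≤ ∑ x ∈ Finset.univ.filter (· ∈ B), |(μ {x}).toReal - (ν {x}).toReal| :=
          Finset.sum_le_sum fun x _ => le_abs_self _
      _ ≤ ∑ x : Ω, |(μ {x}).toReal - (ν {x}).toReal| :=
          Finset.sum_le_sum_of_subset_of_nonneg (Finset.filter_subset _ _)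
            (fun x _ _ => abs_nonneg _)
  rw [Finset.sum_sub_distrib] at h3
  linarith

lemma l1_prod {ι κ : Type*} [Fintype ι] [Fintype κ] (f f0 : ι → ℝ) (g g0 : κ → ℝ)
    (hg : ∀ t, 0 ≤ g t) (hf0 : ∀ s, 0 ≤ f0 s) :
    ∑ x : ι × κ, |f x.1 * g x.2 - f0 x.1 * g0 x.2|
      ≤ (∑ s, |f s - f0 s|) * (∑ t, g t) + (∑ s, f0 s) * (∑ t, |g t - g0 t|) := by
  rw [Fintype.sum_prod_type]
  have hpt : ∀ s t, |f s * g t - f0 s * g0 t| ≤ |f s - f0 s| * g t + f0 s * |g t - g0 t| := by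
    intro s t
    have e : f s * g t - f0 s * g0 t = (f s - f0 s) * g t + f0 s * (g t - g0 t) := by ring
    rw [e]
    refine (abs_add_le _ _).trans ?_
    rw [abs_mul, abs_mul, abs_of_nonneg (hg t), abs_of_nonneg (hf0 s)]
  calc ∑ s, ∑ t, |f s * g t - f0 s * g0 t|
      ≤ ∑ s, ∑ t, (|f s - f0 s| * g t + f0 s * |g t - g0 t|) :=
        Finset.sum_le_sum fun s _ => Finset.sum_le_sum fun t _ => hpt s t
    _ = (∑ s, |f s - f0 s|) * (∑ t, g t) + (∑ s, f0 s) * (∑ t, |g t - g0 t|) := by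
        simp_rw [Finset.sum_add_distrib, ← Finset.mul_sum]
        rw [← Finset.sum_mul, ← Finset.sum_mul]

def epoint (d : ℕ) (hd : 1 ≤ d) : EuclideanSpace ℝ (Fin d) :=
  EuclideanSpace.single (⟨0, hd⟩ : Fin d) 1

def bool2E (d : ℕ) (hd : 1 ≤ d) : Bool → EuclideanSpace ℝ (Fin d) :=
  fun b => if b then epoint d hd else 0

def pmeas (d : ℕ) (hd : 1 ≤ d) (a : ℝ) : Measure (EuclideanSpace ℝ (Fin d)) :=
  Measure.map (bool2E d hd) (bmeas a)

lemma pmeas_eq (d : ℕ) (hd : 1 ≤ d) (a : ℝ) :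
    pmeas d hd a = ENNReal.ofReal (1/2 + a) • Measure.dirac (0 : EuclideanSpace ℝ (Fin d))
      + ENNReal.ofReal (1/2 - a) • Measure.dirac (epoint d hd) := by
  rw [pmeas, bmeas, Measure.map_add _ _ measurable_from_top, Measure.map_smul,
    Measure.map_smul, Measure.map_dirac' measurable_from_top, Measure.map_dirac' measurable_from_top]
  simp [bool2E]

lemma pmeas_prob (d : ℕ) (hd : 1 ≤ d) (a : ℝ) (ha : |a| ≤ 1/2) :
    IsProbabilityMeasure (pmeas d hd a) := by
  rw [abs_le] at ha
  constructor
  rw [pmeas_eq]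
  simp only [Measure.add_apply, Measure.smul_apply, measure_univ, smul_eq_mul, mul_one]
  rw [← ENNReal.ofReal_add (by linarith [ha.1, ha.2]) (by linarith [ha.1, ha.2])]
  norm_num

lemma stdGaussian_prob (d : ℕ) : IsProbabilityMeasure (stdGaussian d) := by
  rw [_root_.stdGaussian]
  exact Measure.isProbabilityMeasure_map
    (EuclideanSpace.equiv (Fin d) ℝ).symm.continuous.measurable.aemeasurable

lemma measurable_normalize (d : ℕ) :
    Measurable fun x : EuclideanSpace ℝ (Fin d) => ‖x‖⁻¹ • x :=
  (measurable_norm.inv).smul measurable_id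

lemma sphereUniform_prob_s7 (d : ℕ) : IsProbabilityMeasure (sphereUniform d) := by
  haveI := stdGaussian_prob d
  rw [sphereUniform]
  exact Measure.isProbabilityMeasure_map (measurable_normalize d).aemeasurable

lemma inner_epoint (d : ℕ) (hd : 1 ≤ d) (β : EuclideanSpace ℝ (Fin d)) :
    ⟪β, epoint d hd⟫ = β ⟨0, hd⟩ := by
  rw [epoint, EuclideanSpace.inner_single_right]
  simp

lemma sphere_null (d : ℕ) (hd : 1 ≤ d) :
    sphereUniform d {β | ⟪β, epoint d hd⟫ = 0} = 0 := by
  have hSm : MeasurableSet {β : EuclideanSpace ℝ (Fin d) | ⟪β, epoint d hd⟫ = 0} := by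
    have : Measurable fun β : EuclideanSpace ℝ (Fin d) => ⟪β, epoint d hd⟫ :=
      Measurable.inner measurable_id measurable_const
    exact this (measurableSet_singleton 0)
  rw [sphereUniform, Measure.map_apply (measurable_normalize d) hSm]
  have hsub : (fun x : EuclideanSpace ℝ (Fin d) => ‖x‖⁻¹ • x) ⁻¹'
      {β | ⟪β, epoint d hd⟫ = 0} ⊆ {x : EuclideanSpace ℝ (Fin d) | x ⟨0, hd⟩ = 0} := by
    intro x hx
    simp only [Set.mem_preimage, Set.mem_setOf_eq] at hx ⊢
    rw [real_inner_smul_left, inner_epoint] at hx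
    rcases mul_eq_zero.mp hx with h | h
    · have : x = 0 := by
        have hn : ‖x‖ = 0 := by
          by_contra hc
          exact hc (by simpa [inv_eq_zero] using h)
        exact norm_eq_zero.mp hn
      simp [this]
    · exact h
  refine measure_mono_null hsub ?_
  have hset : MeasurableSet {x : EuclideanSpace ℝ (Fin d) | x ⟨0, hd⟩ = 0} := by
    have : Measurable fun x : EuclideanSpace ℝ (Fin d) => x ⟨0, hd⟩ := by
      exact (measurable_pi_apply _).comp (EuclideanSpace.equiv (Fin d) ℝ).continuous.measurable
    exact this (measurableSet_singleton 0)
  rw [_root_.stdGaussian, Measure.map_apply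
    (EuclideanSpace.equiv (Fin d) ℝ).symm.continuous.measurable hset]
  have heq : (⇑(EuclideanSpace.equiv (Fin d) ℝ).symm) ⁻¹' {x | x ⟨0, hd⟩ = 0}
      = (fun f : Fin d → ℝ => f ⟨0, hd⟩) ⁻¹' {(0:ℝ)} := rfl
  rw [heq]
  have h0 : (gaussianReal 0 1) {(0:ℝ)} = 0 :=
    gaussianReal_absolutelyContinuous 0 one_ne_zero Real.volume_singleton
  exact Measure.pi_eval_preimage_null (fun _ : Fin d => gaussianReal 0 1)
    (i := ⟨0, hd⟩) h0

/-- indicator helper -/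
def indf (r t : ℝ) : ℝ := if r ≤ t then 1 else 0

lemma projCDF_pmeas (d : ℕ) (hd : 1 ≤ d) (a : ℝ) (ha : |a| ≤ 1/2)
    (β : EuclideanSpace ℝ (Fin d)) (t : ℝ) :
    projCDF (pmeas d hd a) β t
      = (1/2 + a) * indf 0 t + (1/2 - a) * indf (⟪β, epoint d hd⟫) t := by
  rw [abs_le] at ha
  have hS : MeasurableSet {x : EuclideanSpace ℝ (Fin d) | ⟪β, x⟫ ≤ t} := by
    have : Measurable fun x : EuclideanSpace ℝ (Fin d) => ⟪β, x⟫ :=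
      Measurable.inner measurable_const measurable_id
    exact this measurableSet_Iic
  rw [projCDF, pmeas_eq]
  simp only [Measure.add_apply, Measure.smul_apply, smul_eq_mul]
  rw [Measure.dirac_apply' _ hS, Measure.dirac_apply' _ hS]
  have h0 : ({x : EuclideanSpace ℝ (Fin d) | ⟪β, x⟫ ≤ t}.indicator 1 (0 : EuclideanSpace ℝ (Fin d)) : ℝ≥0∞)
      = ENNReal.ofReal (indf 0 t) := by
    simp only [Set.indicator_apply, Set.mem_setOf_eq, inner_zero_right, indf, Pi.one_apply]
    split_ifs <;> simp
  have he : ({x : EuclideanSpace ℝ (Fin d) | ⟪β, x⟫ ≤ t}.indicator 1 (epoint d hd) : ℝ≥0∞)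
      = ENNReal.ofReal (indf (⟪β, epoint d hd⟫) t) := by
    simp only [Set.indicator_apply, Set.mem_setOf_eq, indf, Pi.one_apply]
    split_ifs <;> simp
  have hi0 : 0 ≤ indf 0 t := by rw [indf]; split_ifs <;> norm_num
  have hie : 0 ≤ indf (⟪β, epoint d hd⟫) t := by rw [indf]; split_ifs <;> norm_num
  have hm1 : 0 ≤ (1/2 + a) * indf 0 t := mul_nonneg (by linarith [ha.1, ha.2]) hi0
  have hm2 : 0 ≤ (1/2 - a) * indf (⟪β, epoint d hd⟫) t :=
    mul_nonneg (by linarith [ha.1, ha.2]) hie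
  rw [h0, he, ← ENNReal.ofReal_mul (by linarith [ha.1, ha.2]),
    ← ENNReal.ofReal_mul (by linarith [ha.1, ha.2]),
    ← ENNReal.ofReal_add hm1 hm2, ENNReal.toReal_ofReal (by linarith)]

/-- the mixture weights -/
def w0E (θ am an : ℝ) : ℝ≥0∞ :=
  ENNReal.ofReal θ * ENNReal.ofReal (1/2 + am) + ENNReal.ofReal (1 - θ) * ENNReal.ofReal (1/2 - an)
def w1E (θ am an : ℝ) : ℝ≥0∞ :=
  ENNReal.ofReal θ * ENNReal.ofReal (1/2 - am) + ENNReal.ofReal (1 - θ) * ENNReal.ofReal (1/2 + an)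

lemma projLaw_mix_s7 (d : ℕ) (hd : 1 ≤ d) (θ am an : ℝ) (β : EuclideanSpace ℝ (Fin d)) :
    projLaw (ENNReal.ofReal θ • pmeas d hd am + ENNReal.ofReal (1 - θ) • pmeas d hd (-an)) β
      = w0E θ am an • Measure.dirac (0:ℝ) + w1E θ am an • Measure.dirac (⟪β, epoint d hd⟫) := by
  have hg : Measurable fun x : EuclideanSpace ℝ (Fin d) => ⟪β, x⟫ :=
    Measurable.inner measurable_const measurable_id
  rw [projLaw, pmeas_eq, pmeas_eq]
  rw [smul_add, smul_add, smul_smul, smul_smul, smul_smul, smul_smul]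
  rw [Measure.map_add _ _ hg, Measure.map_add _ _ hg, Measure.map_add _ _ hg,
    Measure.map_smul, Measure.map_smul, Measure.map_smul, Measure.map_smul,
    Measure.map_dirac' hg, Measure.map_dirac' hg]
  rw [inner_zero_right, w0E, w1E, add_smul, add_smul]
  have e1 : (1/2 : ℝ) + -an = 1/2 - an := by ring
  rw [e1]
  have e2 : (1/2 : ℝ) - -an = 1/2 + an := by ring
  rw [e2]
  abel

lemma w0E_toReal {θ am an : ℝ} (hθ : θ ∈ Set.Ioo (0:ℝ) 1) (ham : |am| ≤ 1/2)
    (han : |an| ≤ 1/2) :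
    (w0E θ am an).toReal = θ * (1/2 + am) + (1 - θ) * (1/2 - an) := by
  obtain ⟨h1, h2⟩ := hθ
  rw [abs_le] at ham han
  rw [w0E, ENNReal.toReal_add (by finiteness) (by finiteness), ENNReal.toReal_mul,
    ENNReal.toReal_mul, ENNReal.toReal_ofReal (by linarith),
    ENNReal.toReal_ofReal (by linarith [ham.1, ham.2]),
    ENNReal.toReal_ofReal (by linarith), ENNReal.toReal_ofReal (by linarith [han.1, han.2])]

lemma w1E_toReal {θ am an : ℝ} (hθ : θ ∈ Set.Ioo (0:ℝ) 1) (ham : |am| ≤ 1/2)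
    (han : |an| ≤ 1/2) :
    (w1E θ am an).toReal = θ * (1/2 - am) + (1 - θ) * (1/2 + an) := by
  obtain ⟨h1, h2⟩ := hθ
  rw [abs_le] at ham han
  rw [w1E, ENNReal.toReal_add (by finiteness) (by finiteness), ENNReal.toReal_mul,
    ENNReal.toReal_mul, ENNReal.toReal_ofReal (by linarith),
    ENNReal.toReal_ofReal (by linarith [ham.1, ham.2]),
    ENNReal.toReal_ofReal (by linarith), ENNReal.toReal_ofReal (by linarith [han.1, han.2])]

def Gfun (θ am an c : ℝ) : ℝ :=
  (w0E θ am an).toReal * ((am + an) * (1 - indf c 0)) ^ 2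
    + (w1E θ am an).toReal * ((am + an) * (indf 0 c - 1)) ^ 2

lemma indf_measurable (r : ℝ) : Measurable (indf r) := by
  unfold indf
  exact Measurable.ite measurableSet_Ici measurable_const measurable_const

lemma indf_le (r t : ℝ) : 0 ≤ indf r t ∧ indf r t ≤ 1 := by
  unfold indf; split_ifs <;> norm_num

lemma inner_integral_eq (d : ℕ) (hd : 1 ≤ d) {θ am an : ℝ}
    (ham : |am| ≤ 1/2) (han : |an| ≤ 1/2) (β : EuclideanSpace ℝ (Fin d)) :
    (∫ t, (projCDF (pmeas d hd am) β t - projCDF (pmeas d hd (-an)) β t) ^ 2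
      ∂(projLaw (ENNReal.ofReal θ • pmeas d hd am
          + ENNReal.ofReal (1 - θ) • pmeas d hd (-an)) β))
      = Gfun θ am an (⟪β, epoint d hd⟫) := by
  set c : ℝ := ⟪β, epoint d hd⟫ with hc
  have hΔ : ∀ t, (projCDF (pmeas d hd am) β t - projCDF (pmeas d hd (-an)) β t) ^ 2
      = ((am + an) * (indf 0 t - indf c t)) ^ 2 := by
    intro t
    rw [projCDF_pmeas d hd am ham β t, projCDF_pmeas d hd (-an) (by rwa [abs_neg]) β t, ← hc]
    ring_nf
  simp only [hΔ]
  rw [projLaw_mix_s7 d hd θ am an β, ← hc]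
  have hfm : Measurable fun t => ((am + an) * (indf 0 t - indf c t)) ^ 2 := by
    exact ((measurable_const.mul ((indf_measurable 0).sub (indf_measurable c))).pow
      measurable_const)
  have hbound : ∀ w : ℝ≥0∞, w ≠ ⊤ → ∀ x₀ : ℝ,
      Integrable (fun t => ((am + an) * (indf 0 t - indf c t)) ^ 2)
        (w • Measure.dirac x₀) := by
    intro w hw x₀
    haveI : IsFiniteMeasure (w • Measure.dirac x₀) := (Measure.dirac x₀).smul_finite hw
    refine Integrable.mono' (integrable_const ((am + an) ^ 2)) hfm.aestronglyMeasurable ?_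
    refine Filter.Eventually.of_forall fun t => ?_
    rw [Real.norm_eq_abs, abs_of_nonneg (by positivity), mul_pow]
    have h1 := indf_le 0 t
    have h2 := indf_le c t
    have hx2 : (indf 0 t - indf c t) ^ 2 ≤ 1 := by nlinarith [h1.1, h1.2, h2.1, h2.2]
    calc (am + an) ^ 2 * (indf 0 t - indf c t) ^ 2 ≤ (am + an) ^ 2 * 1 :=
          mul_le_mul_of_nonneg_left hx2 (sq_nonneg _)
      _ = (am + an) ^ 2 := mul_one _
  rw [integral_add_measure (hbound _ (by rw [w0E]; finiteness) _)
    (hbound _ (by rw [w1E]; finiteness) _),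
    integral_smul_measure, integral_smul_measure, integral_dirac, integral_dirac]
  have h00 : indf 0 (0:ℝ) = 1 := by unfold indf; norm_num
  have hcc : indf c c = 1 := by unfold indf; norm_num
  rw [Gfun, h00, hcc]
  simp [smul_eq_mul]

lemma cvm_lower (d : ℕ) (hd : 1 ≤ d) {θ am an : ℝ} (hθ : θ ∈ Set.Ioo (0:ℝ) 1)
    (ham : am ∈ Set.Icc (0:ℝ) (1/4)) (han : an ∈ Set.Icc (0:ℝ) (1/4)) :
    (am + an) ^ 2 / 4 ≤ cvmSq θ (pmeas d hd am) (pmeas d hd (-an)) := by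
  obtain ⟨hθ0, hθ1⟩ := hθ
  obtain ⟨ham0, ham1⟩ := ham
  obtain ⟨han0, han1⟩ := han
  have hamabs : |am| ≤ 1/2 := by rw [abs_le]; constructor <;> linarith
  have hanabs : |an| ≤ 1/2 := by rw [abs_le]; constructor <;> linarith
  have hw0 : (w0E θ am an).toReal = θ * (1/2 + am) + (1 - θ) * (1/2 - an) :=
    w0E_toReal ⟨hθ0, hθ1⟩ hamabs hanabs
  have hw1 : (w1E θ am an).toReal = θ * (1/2 - am) + (1 - θ) * (1/2 + an) :=
    w1E_toReal ⟨hθ0, hθ1⟩ hamabs hanabs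
  haveI := sphereUniform_prob_s7 d
  have hcvm : cvmSq θ (pmeas d hd am) (pmeas d hd (-an))
      = ∫ β, Gfun θ am an (⟪β, epoint d hd⟫) ∂(sphereUniform d) := by
    rw [cvmSq]
    exact integral_congr_ae (Filter.Eventually.of_forall fun β =>
      inner_integral_eq d hd hamabs hanabs β)
  rw [hcvm]
  have hGm : Measurable fun β : EuclideanSpace ℝ (Fin d) => Gfun θ am an (⟪β, epoint d hd⟫) := by
    have hin : Measurable fun β : EuclideanSpace ℝ (Fin d) => ⟪β, epoint d hd⟫ :=
      Measurable.inner measurable_id measurable_const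
    have hG : Measurable (Gfun θ am an) := by
      unfold Gfun
      have h1 : Measurable fun c : ℝ => indf c 0 := by
        unfold indf
        exact Measurable.ite measurableSet_Iic measurable_const measurable_const
      have h2 : Measurable fun c : ℝ => indf 0 c := indf_measurable 0
      exact (measurable_const.mul (((measurable_const.mul
        ((measurable_const.sub h1)))).pow measurable_const)).add
        (measurable_const.mul (((measurable_const.mul
        ((h2.sub measurable_const)))).pow measurable_const))
    exact hG.comp hin
  have hw0nn : 0 ≤ (w0E θ am an).toReal := ENNReal.toReal_nonneg
  have hw1nn : 0 ≤ (w1E θ am an).toReal := ENNReal.toReal_nonneg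
  have hGbound : ∀ c : ℝ, |Gfun θ am an c|
      ≤ ((w0E θ am an).toReal + (w1E θ am an).toReal) * (am + an) ^ 2 := by
    intro c
    have h1 := indf_le c 0
    have h2 := indf_le 0 c
    have hnn : 0 ≤ Gfun θ am an c := by
      unfold Gfun; positivity
    rw [abs_of_nonneg hnn]
    unfold Gfun
    rw [mul_pow, mul_pow]
    have b1 : (1 - indf c 0) ^ 2 ≤ 1 := by nlinarith [h1.1, h1.2]
    have b2 : (indf 0 c - 1) ^ 2 ≤ 1 := by nlinarith [h2.1, h2.2]
    have g1 : (w0E θ am an).toReal * (am + an) ^ 2 * (1 - indf c 0) ^ 2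
        ≤ (w0E θ am an).toReal * (am + an) ^ 2 * 1 :=
      mul_le_mul_of_nonneg_left b1 (by positivity)
    have g2 : (w1E θ am an).toReal * (am + an) ^ 2 * (indf 0 c - 1) ^ 2
        ≤ (w1E θ am an).toReal * (am + an) ^ 2 * 1 :=
      mul_le_mul_of_nonneg_left b2 (by positivity)
    nlinarith [g1, g2]
  have hint : Integrable (fun β : EuclideanSpace ℝ (Fin d) => Gfun θ am an (⟪β, epoint d hd⟫))
      (sphereUniform d) := by
    refine Integrable.mono' (integrable_const
      (((w0E θ am an).toReal + (w1E θ am an).toReal) * (am + an) ^ 2))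
      hGm.aestronglyMeasurable ?_
    exact Filter.Eventually.of_forall fun β => hGbound _
  have hae : ∀ᵐ β ∂(sphereUniform d), (am + an) ^ 2 / 4 ≤ Gfun θ am an (⟪β, epoint d hd⟫) := by
    have hne : ∀ᵐ β ∂(sphereUniform d), ⟪β, epoint d hd⟫ ≠ 0 := by
      rw [ae_iff]
      simpa using sphere_null d hd
    refine hne.mono fun β hβ => ?_
    rcases lt_or_gt_of_ne hβ with hlt | hgt
    · have e1 : indf (⟪β, epoint d hd⟫) 0 = 1 := by unfold indf; rw [if_pos (le_of_lt hlt)]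
      have e2 : indf 0 (⟪β, epoint d hd⟫) = 0 := by unfold indf; rw [if_neg (not_le.mpr hlt)]
      rw [Gfun, e1, e2, hw1]
      have hq : 1/4 ≤ θ * (1/2 - am) + (1 - θ) * (1/2 + an) := by
        nlinarith [mul_nonneg hθ0.le (by linarith : (0:ℝ) ≤ 1/4 - am),
          mul_nonneg (by linarith : (0:ℝ) ≤ 1 - θ) (by linarith : (0:ℝ) ≤ 1/4 + an)]
      have h1 : ((am + an) * ((1:ℝ) - 1)) ^ 2 = 0 := by ring
      have h2 : ((am + an) * ((0:ℝ) - 1)) ^ 2 = (am + an) ^ 2 := by ring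
      rw [h1, h2, mul_zero, zero_add]
      calc (am + an) ^ 2 / 4 = (1/4) * (am + an) ^ 2 := by ring
        _ ≤ (θ * (1/2 - am) + (1 - θ) * (1/2 + an)) * (am + an) ^ 2 :=
            mul_le_mul_of_nonneg_right hq (sq_nonneg _)
    · have e1 : indf (⟪β, epoint d hd⟫) 0 = 0 := by unfold indf; rw [if_neg (not_le.mpr hgt)]
      have e2 : indf 0 (⟪β, epoint d hd⟫) = 1 := by unfold indf; rw [if_pos (le_of_lt hgt)]
      rw [Gfun, e1, e2, hw0]
      have hq : 1/4 ≤ θ * (1/2 + am) + (1 - θ) * (1/2 - an) := by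
        nlinarith [mul_nonneg hθ0.le (by linarith : (0:ℝ) ≤ 1/4 + am),
          mul_nonneg (by linarith : (0:ℝ) ≤ 1 - θ) (by linarith : (0:ℝ) ≤ 1/4 - an)]
      have h1 : ((am + an) * ((1:ℝ) - 0)) ^ 2 = (am + an) ^ 2 := by ring
      have h2 : ((am + an) * ((1:ℝ) - 1)) ^ 2 = 0 := by ring
      rw [h1, h2, mul_zero, add_zero]
      calc (am + an) ^ 2 / 4 = (1/4) * (am + an) ^ 2 := by ring
        _ ≤ (θ * (1/2 + am) + (1 - θ) * (1/2 - an)) * (am + an) ^ 2 :=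
            mul_le_mul_of_nonneg_right hq (sq_nonneg _)
  calc (am + an) ^ 2 / 4
      = ∫ _β, (am + an) ^ 2 / 4 ∂(sphereUniform d) := by
        rw [integral_const, probReal_univ, one_smul]
    _ ≤ ∫ β, Gfun θ am an (⟪β, epoint d hd⟫) ∂(sphereUniform d) :=
        integral_mono_ae (integrable_const _) hint hae

lemma pv_zero_prod (m : ℕ) (s : Fin m → Bool) : ∏ i, pv 0 (s i) = (1/2 : ℝ)^m := by
  have : ∀ i : Fin m, pv 0 (s i) = 1/2 := by
    intro i; cases s i <;> simp [pv]
  rw [Finset.prod_congr rfl fun i _ => this i, Finset.prod_const, Finset.card_univ,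
    Fintype.card_fin]


/-- Minimax lower bound, Theorem 4.1: for every `α ∈ (0,1)` and
`ζ ∈ (0, 1-α)` there is `b = b(α,ζ) > 0` such that for all `d ≥ 1`, `m, n ≥ 2`, every weight
`ϑ ∈ (0,1)`, and every Borel rejection region `A` of level `α` (i.e. `(P^{⊗m}⊗P^{⊗n})(A) ≤ α`
for all Borel probability measures `P`), there are Borel probability measures `P_X, P_Y` with
`W_d(P_X,P_Y) ≥ b (m^{-1/2}+n^{-1/2})` whose type II error satisfies
`(P_X^{⊗m} ⊗ P_Y^{⊗n})(Aᶜ) ≥ ζ`. -/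
theorem stmt7 (α ζ : ℝ) (hα : α ∈ Set.Ioo (0 : ℝ) 1) (hζ : ζ ∈ Set.Ioo (0 : ℝ) (1 - α)) :
    ∃ b : ℝ, 0 < b ∧
      ∀ (d m n : ℕ), 1 ≤ d → 2 ≤ m → 2 ≤ n → ∀ ϑ : ℝ, ϑ ∈ Set.Ioo (0 : ℝ) 1 →
        ∀ A : Set ((Fin m → EuclideanSpace ℝ (Fin d)) × (Fin n → EuclideanSpace ℝ (Fin d))),
          MeasurableSet A →
          (∀ (P : Measure (EuclideanSpace ℝ (Fin d))) (hP : IsProbabilityMeasure P),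
            sampleLaw m n P P hP hP A ≤ ENNReal.ofReal α) →
          ∃ (PX PY : Measure (EuclideanSpace ℝ (Fin d)))
            (hPX : IsProbabilityMeasure PX) (hPY : IsProbabilityMeasure PY),
            b * (1 / Real.sqrt m + 1 / Real.sqrt n) ≤ Real.sqrt (cvmSq ϑ PX PY) ∧
            ENNReal.ofReal ζ ≤ sampleLaw m n PX PY hPX hPY Aᶜ := by
  classical
  obtain ⟨hα0, hα1⟩ := hα
  obtain ⟨hζ0, hζ1⟩ := hζ
  set δ0 : ℝ := (1 - α - ζ)/2 with hδ0def
  have hδ0 : 0 < δ0 := by rw [hδ0def]; linarith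
  set L : ℝ := Real.log (1 + δ0^2) with hLdef
  have hLpos : 0 < L := Real.log_pos (by nlinarith)
  set c0 : ℝ := min (1/4) (Real.sqrt L / 2) with hc0def
  have hc0pos : 0 < c0 := lt_min (by norm_num) (by positivity)
  have hc0quarter : c0 ≤ 1/4 := min_le_left _ _
  have hc0L : 4 * c0^2 ≤ L := by
    have h1 : c0 ≤ Real.sqrt L / 2 := min_le_right _ _
    nlinarith [Real.sq_sqrt hLpos.le, Real.sqrt_nonneg L, hc0pos]
  refine ⟨c0/2, by positivity, ?_⟩
  intro d m n hd hm hn ϑ hϑ A hA hlevel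
  have hm1 : (1:ℝ) ≤ (m:ℝ) := by exact_mod_cast le_trans one_le_two hm
  have hn1 : (1:ℝ) ≤ (n:ℝ) := by exact_mod_cast le_trans one_le_two hn
  have hsm : (1:ℝ) ≤ Real.sqrt m := Real.one_le_sqrt.mpr hm1
  have hsn : (1:ℝ) ≤ Real.sqrt n := Real.one_le_sqrt.mpr hn1
  set am : ℝ := c0 / Real.sqrt m with hamdef
  set an : ℝ := c0 / Real.sqrt n with handef
  have ham0 : 0 ≤ am := by positivity
  have han0 : 0 ≤ an := by positivity
  have ham1 : am ≤ 1/4 := le_trans (div_le_self hc0pos.le hsm) hc0quarter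
  have han1 : an ≤ 1/4 := le_trans (div_le_self hc0pos.le hsn) hc0quarter
  have hamabs : |am| ≤ 1/2 := by rw [abs_le]; constructor <;> linarith
  have hanabs : |(-an)| ≤ 1/2 := by rw [abs_neg, abs_le]; constructor <;> linarith
  have hPX : IsProbabilityMeasure (pmeas d hd am) := pmeas_prob d hd am hamabs
  have hPY : IsProbabilityMeasure (pmeas d hd (-an)) := pmeas_prob d hd (-an) hanabs
  refine ⟨pmeas d hd am, pmeas d hd (-an), hPX, hPY, ?_, ?_⟩
  · -- the separation in Cramér–von Mises distance
    have hlow := cvm_lower d hd hϑ ⟨ham0, ham1⟩ ⟨han0, han1⟩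
    have heq : c0/2 * (1/Real.sqrt m + 1/Real.sqrt n) = (am + an)/2 := by
      rw [hamdef, handef]; ring
    rw [heq]
    calc (am + an)/2 = Real.sqrt (((am + an)/2)^2) := (Real.sqrt_sq (by positivity)).symm
      _ = Real.sqrt ((am + an)^2/4) := by congr 1; ring
      _ ≤ Real.sqrt (cvmSq ϑ (pmeas d hd am) (pmeas d hd (-an))) := Real.sqrt_le_sqrt hlow
  · -- the type II error bound
    have hP0 : IsProbabilityMeasure (pmeas d hd 0) := pmeas_prob d hd 0 (by norm_num)
    haveI := hP0
    haveI hbm : IsProbabilityMeasure (bmeas am) := isProbabilityMeasure_bmeas am hamabs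
    haveI hbn : IsProbabilityMeasure (bmeas (-an)) := isProbabilityMeasure_bmeas (-an) hanabs
    haveI hb0 : IsProbabilityMeasure (bmeas 0) := isProbabilityMeasure_bmeas 0 (by norm_num)
    haveI := hPX; haveI := hPY
    -- measure preserving maps from the Bool model
    have hFm : ∀ (a : ℝ), |a| ≤ 1/2 →
        MeasurePreserving (fun (s : Fin m → Bool) (i : Fin m) => bool2E d hd (s i))
          (Measure.pi fun _ : Fin m => bmeas a) (Measure.pi fun _ : Fin m => pmeas d hd a) := by
      intro a ha
      haveI := pmeas_prob d hd a ha
      haveI := isProbabilityMeasure_bmeas a ha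
      exact measurePreserving_pi _ _ fun _ => ⟨measurable_from_top, rfl⟩
    have hFn : ∀ (a : ℝ), |a| ≤ 1/2 →
        MeasurePreserving (fun (s : Fin n → Bool) (i : Fin n) => bool2E d hd (s i))
          (Measure.pi fun _ : Fin n => bmeas a) (Measure.pi fun _ : Fin n => pmeas d hd a) := by
      intro a ha
      haveI := pmeas_prob d hd a ha
      haveI := isProbabilityMeasure_bmeas a ha
      exact measurePreserving_pi _ _ fun _ => ⟨measurable_from_top, rfl⟩
    set Φ : (Fin m → Bool) × (Fin n → Bool)
        → (Fin m → EuclideanSpace ℝ (Fin d)) × (Fin n → EuclideanSpace ℝ (Fin d)) :=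
      Prod.map (fun (s : Fin m → Bool) (i : Fin m) => bool2E d hd (s i))
        (fun (s : Fin n → Bool) (i : Fin n) => bool2E d hd (s i)) with hΦdef
    set B : Set ((Fin m → Bool) × (Fin n → Bool)) := Φ ⁻¹' Aᶜ with hBdef
    set ν1 : Measure ((Fin m → Bool) × (Fin n → Bool)) :=
      (Measure.pi fun _ : Fin m => bmeas am).prod (Measure.pi fun _ : Fin n => bmeas (-an))
      with hν1def
    set ν0 : Measure ((Fin m → Bool) × (Fin n → Bool)) :=
      (Measure.pi fun _ : Fin m => bmeas 0).prod (Measure.pi fun _ : Fin n => bmeas 0)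
      with hν0def
    haveI : IsProbabilityMeasure ν1 := by rw [hν1def]; infer_instance
    haveI : IsProbabilityMeasure ν0 := by rw [hν0def]; infer_instance
    have hprod1 : MeasurePreserving Φ ν1 (sampleLaw m n (pmeas d hd am) (pmeas d hd (-an)) hPX hPY) :=
      (hFm am hamabs).prod (hFn (-an) hanabs)
    have hprod0 : MeasurePreserving Φ ν0 (sampleLaw m n (pmeas d hd 0) (pmeas d hd 0) hP0 hP0) :=
      (hFm 0 (by norm_num)).prod (hFn 0 (by norm_num))
    have hmeas1 : sampleLaw m n (pmeas d hd am) (pmeas d hd (-an)) hPX hPY Aᶜ = ν1 B :=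
      (hprod1.measure_preimage hA.compl.nullMeasurableSet).symm
    have hmeas0 : sampleLaw m n (pmeas d hd 0) (pmeas d hd 0) hP0 hP0 Aᶜ = ν0 B :=
      (hprod0.measure_preimage hA.compl.nullMeasurableSet).symm
    -- the null hypothesis level bound
    have hlev := hlevel (pmeas d hd 0) hP0
    haveI : IsProbabilityMeasure (sampleLaw m n (pmeas d hd 0) (pmeas d hd 0) hP0 hP0) := by
      rw [show sampleLaw m n (pmeas d hd 0) (pmeas d hd 0) hP0 hP0
        = (Measure.pi fun _ : Fin m => pmeas d hd 0).prod
            (Measure.pi fun _ : Fin n => pmeas d hd 0) from rfl]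
      infer_instance
    have hν0B : 1 - α ≤ (ν0 B).toReal := by
      rw [← hmeas0]
      have hAle : (sampleLaw m n (pmeas d hd 0) (pmeas d hd 0) hP0 hP0 A).toReal ≤ α :=
        ENNReal.toReal_le_of_le_ofReal hα0.le hlev
      have hcompl : sampleLaw m n (pmeas d hd 0) (pmeas d hd 0) hP0 hP0 Aᶜ
          = 1 - sampleLaw m n (pmeas d hd 0) (pmeas d hd 0) hP0 hP0 A :=
        prob_compl_eq_one_sub hA
      rw [hcompl, ENNReal.toReal_sub_of_le prob_le_one ENNReal.one_ne_top, ENNReal.toReal_one]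
      linarith
    -- total variation bound via atoms
    have hatomsum : ∑ x : (Fin m → Bool) × (Fin n → Bool),
        |(ν0 {x}).toReal - (ν1 {x}).toReal| ≤ δ0 + δ0 := by
      have hatom0 : ∀ x : (Fin m → Bool) × (Fin n → Bool),
          (ν0 {x}).toReal = ((1:ℝ)/2)^m * ((1:ℝ)/2)^n := by
        intro x
        rw [hν0def, show ({x} : Set ((Fin m → Bool) × (Fin n → Bool))) = {x.1} ×ˢ {x.2} from by
          rw [Set.singleton_prod_singleton]]
        rw [Measure.prod_prod, ENNReal.toReal_mul,
          pi_bmeas_singleton m 0 (by norm_num) x.1, pi_bmeas_singleton n 0 (by norm_num) x.2,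
          pv_zero_prod, pv_zero_prod]
      have hatom1 : ∀ x : (Fin m → Bool) × (Fin n → Bool),
          (ν1 {x}).toReal = (∏ i, pv am (x.1 i)) * (∏ i, pv (-an) (x.2 i)) := by
        intro x
        rw [hν1def, show ({x} : Set ((Fin m → Bool) × (Fin n → Bool))) = {x.1} ×ˢ {x.2} from by
          rw [Set.singleton_prod_singleton]]
        rw [Measure.prod_prod, ENNReal.toReal_mul,
          pi_bmeas_singleton m am hamabs x.1, pi_bmeas_singleton n (-an) hanabs x.2]
      have hrw : ∀ x : (Fin m → Bool) × (Fin n → Bool),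
          |(ν0 {x}).toReal - (ν1 {x}).toReal|
            = |((1:ℝ)/2)^m * ((1:ℝ)/2)^n - (∏ i, pv am (x.1 i)) * (∏ i, pv (-an) (x.2 i))| := by
        intro x; rw [hatom0 x, hatom1 x]
      rw [Finset.sum_congr rfl fun x _ => hrw x]
      have hpv_nonneg : ∀ (s : Fin m → Bool), 0 ≤ ∏ i, pv am (s i) := by
        intro s
        refine Finset.prod_nonneg fun i _ => ?_
        cases s i <;> simp [pv] <;> linarith
      have hl1 := l1_prod (fun _ : Fin m → Bool => ((1:ℝ)/2)^m)
        (fun s : Fin m → Bool => ∏ i, pv am (s i))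
        (fun _ : Fin n → Bool => ((1:ℝ)/2)^n)
        (fun t : Fin n → Bool => ∏ i, pv (-an) (t i))
        (fun _ => by positivity) hpv_nonneg
      have hsum_half_n : ∑ _t : Fin n → Bool, ((1:ℝ)/2)^n = 1 := by
        have h2n : ((2:ℝ))^n * ((1:ℝ)/2)^n = 1 := by rw [← mul_pow]; norm_num
        rw [Finset.sum_const]
        simp only [Finset.card_univ, Fintype.card_fun, Fintype.card_bool, Fintype.card_fin,
          nsmul_eq_mul]
        push_cast
        linarith [h2n]
      have hsum_pam : ∑ s : Fin m → Bool, ∏ i, pv am (s i) = 1 := by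
        rw [sum_prod_eq]
        have : ∑ b, pv am b = 1 := by simp [pv]; ring
        rw [this, one_pow]
      have habs_comm_m : ∑ s : Fin m → Bool, |((1:ℝ)/2)^m - ∏ i, pv am (s i)|
          = ∑ s : Fin m → Bool, |(∏ i, pv am (s i)) - ((1:ℝ)/2)^m| := by
        exact Finset.sum_congr rfl fun s _ => abs_sub_comm _ _
      have habs_comm_n : ∑ t : Fin n → Bool, |((1:ℝ)/2)^n - ∏ i, pv (-an) (t i)|
          = ∑ t : Fin n → Bool, |(∏ i, pv (-an) (t i)) - ((1:ℝ)/2)^n| := by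
        exact Finset.sum_congr rfl fun t _ => abs_sub_comm _ _
      -- chi-square bounds
      have hsq_m : Real.sqrt ((m:ℝ)) ^ 2 = (m:ℝ) := Real.sq_sqrt (by positivity)
      have hsq_n : Real.sqrt ((n:ℝ)) ^ 2 = (n:ℝ) := Real.sq_sqrt (by positivity)
      have hm0 : (0:ℝ) < (m:ℝ) := by linarith
      have hn0 : (0:ℝ) < (n:ℝ) := by linarith
      have hmne : (m:ℝ) ≠ 0 := hm0.ne'
      have hnne : (n:ℝ) ≠ 0 := hn0.ne'
      have hexp_m : 4 * (m:ℝ) * am ^ 2 = 4 * c0^2 := by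
        rw [hamdef, div_pow, hsq_m]
        field_simp
      have hexp_n : 4 * (n:ℝ) * (-an) ^ 2 = 4 * c0^2 := by
        rw [neg_sq, handef, div_pow, hsq_n]
        field_simp
      have hexpd : Real.exp (4 * c0^2) - 1 ≤ δ0^2 := by
        have h1 : Real.exp (4 * c0^2) ≤ Real.exp L := Real.exp_le_exp.mpr hc0L
        rw [hLdef, Real.exp_log (by positivity)] at h1
        linarith
      have htv_m : ∑ s : Fin m → Bool, |(∏ i, pv am (s i)) - ((1:ℝ)/2)^m| ≤ δ0 := by
        refine le_trans (chiSq_l1_bound m am) ?_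
        rw [hexp_m]
        calc Real.sqrt (Real.exp (4 * c0^2) - 1) ≤ Real.sqrt (δ0^2) :=
              Real.sqrt_le_sqrt hexpd
          _ = δ0 := Real.sqrt_sq hδ0.le
      have htv_n : ∑ t : Fin n → Bool, |(∏ i, pv (-an) (t i)) - ((1:ℝ)/2)^n| ≤ δ0 := by
        refine le_trans (chiSq_l1_bound n (-an)) ?_
        rw [hexp_n]
        calc Real.sqrt (Real.exp (4 * c0^2) - 1) ≤ Real.sqrt (δ0^2) :=
              Real.sqrt_le_sqrt hexpd
          _ = δ0 := Real.sqrt_sq hδ0.le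
      calc ∑ x : (Fin m → Bool) × (Fin n → Bool),
            |((1:ℝ)/2)^m * ((1:ℝ)/2)^n - (∏ i, pv am (x.1 i)) * (∏ i, pv (-an) (x.2 i))|
          ≤ (∑ s : Fin m → Bool, |((1:ℝ)/2)^m - ∏ i, pv am (s i)|)
              * (∑ _t : Fin n → Bool, ((1:ℝ)/2)^n)
            + (∑ s : Fin m → Bool, ∏ i, pv am (s i))
              * (∑ t : Fin n → Bool, |((1:ℝ)/2)^n - ∏ i, pv (-an) (t i)|) := hl1
        _ ≤ δ0 + δ0 := by
            rw [hsum_half_n, hsum_pam, mul_one, one_mul, habs_comm_m, habs_comm_n]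
            exact add_le_add htv_m htv_n
    -- combine
    have hcompare := meas_compare ν0 ν1 B
    have hζle : ζ ≤ (ν1 B).toReal := by
      have : 1 - α - (δ0 + δ0) = ζ := by rw [hδ0def]; ring
      linarith
    rw [hmeas1]
    exact ENNReal.ofReal_le_of_le_toReal hζle
end
end

section
/- Let d ≥ 1, m, n ≥ 3, N = m + n, and let z_1, …, z_N ∈ ℝ^d be arbitrary points. For a permutation π of {1, …, N}, define U*(π) = (1/((m)_3 (n)_3)) Σ Σ h*_CvM(z_{π(i1)}, z_{π(i2)}, z_{π(i3)}; z_{π(m+j1)}, z_{π(m+j2)}, z_{π(m+j3)}), where the first sum is over triples of pairwise distinct indices i1, i2, i3 ∈ {1,…,m}, the second over triples of pairwise distinct indices j1, j2, j3 ∈ {1,…,n}, and (k)_3 = k(k−1)(k−2). Then: (i) (1/N!) Σ_{π ∈ S_N} U*(π) = 0; and (ii) there exists a universal constant C > 0, independent of d, m, n and of the points, such that (1/N!) Σ_{π ∈ S_N} U*(π)² ≤ C·(1/m + 1/n)². -/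
open MeasureTheory ProbabilityTheory Real
open scoped RealInnerProductSpace ENNReal BigOperators

noncomputable section

/-- The third-order Cramér–von Mises kernel `h*_CvM`. -/
def hStarCvM {d : ℕ} (x1 x2 x3 y1 y2 y3 : EuclideanSpace ℝ (Fin d)) : ℝ :=
  (1 / 2) * (∫ β,
      (((if ⟪β, x1⟫ ≤ ⟪β, x3⟫ then (1 : ℝ) else 0) - (if ⟪β, y1⟫ ≤ ⟪β, x3⟫ then (1 : ℝ) else 0))
        * ((if ⟪β, x2⟫ ≤ ⟪β, x3⟫ then (1 : ℝ) else 0) - (if ⟪β, y2⟫ ≤ ⟪β, x3⟫ then (1 : ℝ) else 0)))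
      ∂(sphereUniform d))
  + (1 / 2) * (∫ β,
      (((if ⟪β, x1⟫ ≤ ⟪β, y3⟫ then (1 : ℝ) else 0) - (if ⟪β, y1⟫ ≤ ⟪β, y3⟫ then (1 : ℝ) else 0))
        * ((if ⟪β, x2⟫ ≤ ⟪β, y3⟫ then (1 : ℝ) else 0) - (if ⟪β, y2⟫ ≤ ⟪β, y3⟫ then (1 : ℝ) else 0)))
      ∂(sphereUniform d))

/-- The permuted `U`-statistic: given pooled points `z₁,…,z_{m+n}` and a permutation `π`,
`U*(π) = ((m)₃(n)₃)⁻¹ Σ_{i₁,i₂,i₃ distinct} Σ_{j₁,j₂,j₃ distinct}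
  h*_CvM(z_{π(i₁)}, z_{π(i₂)}, z_{π(i₃)}; z_{π(m+j₁)}, z_{π(m+j₂)}, z_{π(m+j₃)})`. -/
def UStarPerm {d : ℕ} (m n : ℕ) (z : Fin (m + n) → EuclideanSpace ℝ (Fin d))
    (π' : Equiv.Perm (Fin (m + n))) : ℝ :=
  ((m : ℝ) * ((m : ℝ) - 1) * ((m : ℝ) - 2) * ((n : ℝ) * ((n : ℝ) - 1) * ((n : ℝ) - 2)))⁻¹ *
    ∑ i1 : Fin m, ∑ i2 : Fin m, ∑ i3 : Fin m, ∑ j1 : Fin n, ∑ j2 : Fin n, ∑ j3 : Fin n,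
      if i1 ≠ i2 ∧ i1 ≠ i3 ∧ i2 ≠ i3 ∧ j1 ≠ j2 ∧ j1 ≠ j3 ∧ j2 ≠ j3 then
        hStarCvM (z (π' (Fin.castAdd n i1))) (z (π' (Fin.castAdd n i2)))
          (z (π' (Fin.castAdd n i3)))
          (z (π' (Fin.natAdd m j1))) (z (π' (Fin.natAdd m j2))) (z (π' (Fin.natAdd m j3)))
      else 0

/-! ### Auxiliary machinery for `stmt9` -/

namespace Stmt9Aux

/-! #### Kernel lemmas -/

lemma my_int_neg1 {d : ℕ} (μ : Measure (EuclideanSpace ℝ (Fin d)))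
    (f g h k : EuclideanSpace ℝ (Fin d) → ℝ) :
    ∫ β, (g β - f β) * (h β - k β) ∂μ = - ∫ β, (f β - g β) * (h β - k β) ∂μ := by
  rw [← integral_neg]
  congr 1
  funext β
  ring

lemma my_int_neg2 {d : ℕ} (μ : Measure (EuclideanSpace ℝ (Fin d)))
    (f g h k : EuclideanSpace ℝ (Fin d) → ℝ) :
    ∫ β, (f β - g β) * (k β - h β) ∂μ = - ∫ β, (f β - g β) * (h β - k β) ∂μ := by
  rw [← integral_neg]
  congr 1
  funext β
  ring

lemma antisym1 {d : ℕ} (x1 x2 x3 y1 y2 y3 : EuclideanSpace ℝ (Fin d)) :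
    hStarCvM y1 x2 x3 x1 y2 y3 = - hStarCvM x1 x2 x3 y1 y2 y3 := by
  unfold hStarCvM
  rw [my_int_neg1 (sphereUniform d) (fun β => if ⟪β, x1⟫ ≤ ⟪β, x3⟫ then (1:ℝ) else 0)
      (fun β => if ⟪β, y1⟫ ≤ ⟪β, x3⟫ then (1:ℝ) else 0)
      (fun β => if ⟪β, x2⟫ ≤ ⟪β, x3⟫ then (1:ℝ) else 0)
      (fun β => if ⟪β, y2⟫ ≤ ⟪β, x3⟫ then (1:ℝ) else 0),
    my_int_neg1 (sphereUniform d) (fun β => if ⟪β, x1⟫ ≤ ⟪β, y3⟫ then (1:ℝ) else 0)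
      (fun β => if ⟪β, y1⟫ ≤ ⟪β, y3⟫ then (1:ℝ) else 0)
      (fun β => if ⟪β, x2⟫ ≤ ⟪β, y3⟫ then (1:ℝ) else 0)
      (fun β => if ⟪β, y2⟫ ≤ ⟪β, y3⟫ then (1:ℝ) else 0)]
  ring

lemma antisym2 {d : ℕ} (x1 x2 x3 y1 y2 y3 : EuclideanSpace ℝ (Fin d)) :
    hStarCvM x1 y2 x3 y1 x2 y3 = - hStarCvM x1 x2 x3 y1 y2 y3 := by
  unfold hStarCvM
  rw [my_int_neg2 (sphereUniform d) (fun β => if ⟪β, x1⟫ ≤ ⟪β, x3⟫ then (1:ℝ) else 0)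
      (fun β => if ⟪β, y1⟫ ≤ ⟪β, x3⟫ then (1:ℝ) else 0)
      (fun β => if ⟪β, x2⟫ ≤ ⟪β, x3⟫ then (1:ℝ) else 0)
      (fun β => if ⟪β, y2⟫ ≤ ⟪β, x3⟫ then (1:ℝ) else 0),
    my_int_neg2 (sphereUniform d) (fun β => if ⟪β, x1⟫ ≤ ⟪β, y3⟫ then (1:ℝ) else 0)
      (fun β => if ⟪β, y1⟫ ≤ ⟪β, y3⟫ then (1:ℝ) else 0)
      (fun β => if ⟪β, x2⟫ ≤ ⟪β, y3⟫ then (1:ℝ) else 0)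
      (fun β => if ⟪β, y2⟫ ≤ ⟪β, y3⟫ then (1:ℝ) else 0)]
  ring

lemma sphereProb (d : ℕ) : IsProbabilityMeasure (sphereUniform d) := by
  have h1 : IsProbabilityMeasure (stdGaussian d) := by
    unfold _root_.stdGaussian
    exact Measure.isProbabilityMeasure_map
      ((EuclideanSpace.equiv (Fin d) ℝ).symm.continuous.measurable.aemeasurable)
  unfold sphereUniform
  exact Measure.isProbabilityMeasure_map ((measurable_norm.inv.smul measurable_id).aemeasurable)

lemma abs_h_le {d : ℕ} (x1 x2 x3 y1 y2 y3 : EuclideanSpace ℝ (Fin d)) :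
    |hStarCvM x1 x2 x3 y1 y2 y3| ≤ 1 := by
  have := sphereProb d
  have key : ∀ f g h k : EuclideanSpace ℝ (Fin d) → ℝ,
      (∀ β, (f β = 0 ∨ f β = 1)) → (∀ β, (g β = 0 ∨ g β = 1)) →
      (∀ β, (h β = 0 ∨ h β = 1)) → (∀ β, (k β = 0 ∨ k β = 1)) →
      |∫ β, (f β - g β) * (h β - k β) ∂(sphereUniform d)| ≤ 1 := by
    intro f g h k hf hg hh hk
    have hb : ∀ᵐ β ∂(sphereUniform d), ‖(f β - g β) * (h β - k β)‖ ≤ 1 := by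
      filter_upwards with β
      rcases hf β with h1 | h1 <;> rcases hg β with h2 | h2 <;>
        rcases hh β with h3 | h3 <;> rcases hk β with h4 | h4 <;>
        simp [h1, h2, h3, h4, abs_le] <;> norm_num
    have := norm_integral_le_of_norm_le_const (C := 1) hb
    simpa using this
  unfold hStarCvM
  have i1 := key (fun β => if ⟪β, x1⟫ ≤ ⟪β, x3⟫ then (1:ℝ) else 0)
      (fun β => if ⟪β, y1⟫ ≤ ⟪β, x3⟫ then (1:ℝ) else 0)
      (fun β => if ⟪β, x2⟫ ≤ ⟪β, x3⟫ then (1:ℝ) else 0)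
      (fun β => if ⟪β, y2⟫ ≤ ⟪β, x3⟫ then (1:ℝ) else 0)
      (fun β => by split_ifs <;> simp) (fun β => by split_ifs <;> simp)
      (fun β => by split_ifs <;> simp) (fun β => by split_ifs <;> simp)
  have i2 := key (fun β => if ⟪β, x1⟫ ≤ ⟪β, y3⟫ then (1:ℝ) else 0)
      (fun β => if ⟪β, y1⟫ ≤ ⟪β, y3⟫ then (1:ℝ) else 0)
      (fun β => if ⟪β, x2⟫ ≤ ⟪β, y3⟫ then (1:ℝ) else 0)
      (fun β => if ⟪β, y2⟫ ≤ ⟪β, y3⟫ then (1:ℝ) else 0)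
      (fun β => by split_ifs <;> simp) (fun β => by split_ifs <;> simp)
      (fun β => by split_ifs <;> simp) (fun β => by split_ifs <;> simp)
  beta_reduce at i1 i2
  rw [abs_le] at i1 i2 ⊢
  constructor <;> [nlinarith [i1.1, i2.1]; nlinarith [i1.2, i2.2]]

/-! #### Index plumbing -/

abbrev Tup (m n : ℕ) := Fin m × Fin m × Fin m × Fin n × Fin n × Fin n

def tterm {d : ℕ} (m n : ℕ) (z : Fin (m + n) → EuclideanSpace ℝ (Fin d))
    (p : Equiv.Perm (Fin (m + n))) (A : Tup m n) : ℝ :=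
  if A.1 ≠ A.2.1 ∧ A.1 ≠ A.2.2.1 ∧ A.2.1 ≠ A.2.2.1 ∧ A.2.2.2.1 ≠ A.2.2.2.2.1 ∧
      A.2.2.2.1 ≠ A.2.2.2.2.2 ∧ A.2.2.2.2.1 ≠ A.2.2.2.2.2 then
    hStarCvM (z (p (Fin.castAdd n A.1))) (z (p (Fin.castAdd n A.2.1)))
      (z (p (Fin.castAdd n A.2.2.1)))
      (z (p (Fin.natAdd m A.2.2.2.1))) (z (p (Fin.natAdd m A.2.2.2.2.1)))
      (z (p (Fin.natAdd m A.2.2.2.2.2)))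
  else 0

abbrev distC {m n : ℕ} (A : Tup m n) : Prop :=
  A.1 ≠ A.2.1 ∧ A.1 ≠ A.2.2.1 ∧ A.2.1 ≠ A.2.2.1 ∧ A.2.2.2.1 ≠ A.2.2.2.2.1 ∧
    A.2.2.2.1 ≠ A.2.2.2.2.2 ∧ A.2.2.2.2.1 ≠ A.2.2.2.2.2

lemma UStarPerm_eq {d : ℕ} (m n : ℕ) (z : Fin (m + n) → EuclideanSpace ℝ (Fin d))
    (p : Equiv.Perm (Fin (m + n))) :
    UStarPerm m n z p =
      ((m : ℝ) * ((m : ℝ) - 1) * ((m : ℝ) - 2) * ((n : ℝ) * ((n : ℝ) - 1) * ((n : ℝ) - 2)))⁻¹ *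
        ∑ A : Tup m n, tterm m n z p A := by
  rw [UStarPerm]
  congr 1
  rw [Fintype.sum_prod_type]
  apply Finset.sum_congr rfl; intro i1 _
  rw [Fintype.sum_prod_type]
  apply Finset.sum_congr rfl; intro i2 _
  rw [Fintype.sum_prod_type]
  apply Finset.sum_congr rfl; intro i3 _
  rw [Fintype.sum_prod_type]
  apply Finset.sum_congr rfl; intro j1 _
  rw [Fintype.sum_prod_type]
  rfl

lemma abs_tterm_le {d : ℕ} (m n : ℕ) (z : Fin (m + n) → EuclideanSpace ℝ (Fin d))
    (p : Equiv.Perm (Fin (m + n))) (A : Tup m n) : |tterm m n z p A| ≤ 1 := by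
  unfold tterm
  split_ifs
  · exact abs_h_le _ _ _ _ _ _
  · simp

lemma tterm_zero {d : ℕ} {m n : ℕ} (z : Fin (m + n) → EuclideanSpace ℝ (Fin d))
    (p : Equiv.Perm (Fin (m + n))) {A : Tup m n} (hd : ¬ distC A) : tterm m n z p A = 0 := by
  rw [tterm, if_neg hd]

lemma ca_ne_na {m n : ℕ} (i : Fin m) (j : Fin n) : Fin.castAdd n i ≠ Fin.natAdd m j := by
  intro hh
  have := congrArg Fin.val hh
  simp at this
  omega

lemma ca_inj {m n : ℕ} {i i' : Fin m} (hh : (Fin.castAdd n i : Fin (m + n)) = Fin.castAdd n i') :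
    i = i' := Fin.castAdd_injective _ _ hh

lemma na_inj {m n : ℕ} {j j' : Fin n} (hh : (Fin.natAdd m j : Fin (m + n)) = Fin.natAdd m j') :
    j = j' := by
  have := congrArg Fin.val hh
  simp at this
  exact Fin.ext this

lemma perm_sum_neg (N : ℕ) (F : Equiv.Perm (Fin N) → ℝ) (σ : Equiv.Perm (Fin N))
    (hF : ∀ p, F (p * σ) = -F p) : ∑ p : Equiv.Perm (Fin N), F p = 0 := by
  have h2 := Equiv.sum_comp (Equiv.mulRight σ) F
  simp only [Equiv.coe_mulRight, hF] at h2
  rw [Finset.sum_neg_distrib] at h2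
  linarith

lemma tterm_fix {d : ℕ} (m n : ℕ) (z : Fin (m + n) → EuclideanSpace ℝ (Fin d))
    (p σ : Equiv.Perm (Fin (m + n))) (B : Tup m n)
    (f1 : σ (Fin.castAdd n B.1) = Fin.castAdd n B.1)
    (f2 : σ (Fin.castAdd n B.2.1) = Fin.castAdd n B.2.1)
    (f3 : σ (Fin.castAdd n B.2.2.1) = Fin.castAdd n B.2.2.1)
    (f4 : σ (Fin.natAdd m B.2.2.2.1) = Fin.natAdd m B.2.2.2.1)
    (f5 : σ (Fin.natAdd m B.2.2.2.2.1) = Fin.natAdd m B.2.2.2.2.1)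
    (f6 : σ (Fin.natAdd m B.2.2.2.2.2) = Fin.natAdd m B.2.2.2.2.2) :
    tterm m n z (p * σ) B = tterm m n z p B := by
  simp only [tterm, Equiv.Perm.mul_apply, f1, f2, f3, f4, f5, f6]

lemma tterm_swap_neg1 {d : ℕ} (m n : ℕ) (z : Fin (m + n) → EuclideanSpace ℝ (Fin d))
    (p : Equiv.Perm (Fin (m + n))) (i1 i2 i3 : Fin m) (j1 j2 j3 : Fin n) :
    tterm m n z (p * Equiv.swap (Fin.castAdd n i1) (Fin.natAdd m j1)) (i1, i2, i3, j1, j2, j3)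
      = - tterm m n z p (i1, i2, i3, j1, j2, j3) := by
  set σ := Equiv.swap (Fin.castAdd n i1) (Fin.natAdd m j1) with hσ
  by_cases hd : i1 ≠ i2 ∧ i1 ≠ i3 ∧ i2 ≠ i3 ∧ j1 ≠ j2 ∧ j1 ≠ j3 ∧ j2 ≠ j3
  · obtain ⟨h12, h13, -, hj12, hj13, -⟩ := id hd
    have s1 : σ (Fin.castAdd n i1) = Fin.natAdd m j1 := Equiv.swap_apply_left _ _
    have s2 : σ (Fin.natAdd m j1) = Fin.castAdd n i1 := Equiv.swap_apply_right _ _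
    have s3 : σ (Fin.castAdd n i2) = Fin.castAdd n i2 :=
      Equiv.swap_apply_of_ne_of_ne (fun hh => (h12 (ca_inj hh).symm).elim) (ca_ne_na _ _)
    have s4 : σ (Fin.castAdd n i3) = Fin.castAdd n i3 :=
      Equiv.swap_apply_of_ne_of_ne (fun hh => (h13 (ca_inj hh).symm).elim) (ca_ne_na _ _)
    have s5 : σ (Fin.natAdd m j2) = Fin.natAdd m j2 :=
      Equiv.swap_apply_of_ne_of_ne (fun hh => (ca_ne_na i1 j2) hh.symm)
        (fun hh => (hj12 (na_inj hh).symm).elim)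
    have s6 : σ (Fin.natAdd m j3) = Fin.natAdd m j3 :=
      Equiv.swap_apply_of_ne_of_ne (fun hh => (ca_ne_na i1 j3) hh.symm)
        (fun hh => (hj13 (na_inj hh).symm).elim)
    simp only [tterm, Equiv.Perm.mul_apply, s1, s2, s3, s4, s5, s6]
    rw [if_pos hd, if_pos hd]
    exact antisym1 _ _ _ _ _ _
  · simp only [tterm]
    rw [if_neg hd, if_neg hd]
    ring

lemma tterm_swap_neg2 {d : ℕ} (m n : ℕ) (z : Fin (m + n) → EuclideanSpace ℝ (Fin d))
    (p : Equiv.Perm (Fin (m + n))) (i1 i2 i3 : Fin m) (j1 j2 j3 : Fin n) :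
    tterm m n z (p * Equiv.swap (Fin.castAdd n i2) (Fin.natAdd m j2)) (i1, i2, i3, j1, j2, j3)
      = - tterm m n z p (i1, i2, i3, j1, j2, j3) := by
  set σ := Equiv.swap (Fin.castAdd n i2) (Fin.natAdd m j2) with hσ
  by_cases hd : i1 ≠ i2 ∧ i1 ≠ i3 ∧ i2 ≠ i3 ∧ j1 ≠ j2 ∧ j1 ≠ j3 ∧ j2 ≠ j3
  · obtain ⟨h12, -, h23, hj12, -, hj23⟩ := id hd
    have s1 : σ (Fin.castAdd n i2) = Fin.natAdd m j2 := Equiv.swap_apply_left _ _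
    have s2 : σ (Fin.natAdd m j2) = Fin.castAdd n i2 := Equiv.swap_apply_right _ _
    have s3 : σ (Fin.castAdd n i1) = Fin.castAdd n i1 :=
      Equiv.swap_apply_of_ne_of_ne (fun hh => (h12 (ca_inj hh)).elim) (ca_ne_na _ _)
    have s4 : σ (Fin.castAdd n i3) = Fin.castAdd n i3 :=
      Equiv.swap_apply_of_ne_of_ne (fun hh => (h23 (ca_inj hh).symm).elim) (ca_ne_na _ _)
    have s5 : σ (Fin.natAdd m j1) = Fin.natAdd m j1 :=
      Equiv.swap_apply_of_ne_of_ne (fun hh => (ca_ne_na i2 j1) hh.symm)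
        (fun hh => (hj12 (na_inj hh)).elim)
    have s6 : σ (Fin.natAdd m j3) = Fin.natAdd m j3 :=
      Equiv.swap_apply_of_ne_of_ne (fun hh => (ca_ne_na i2 j3) hh.symm)
        (fun hh => (hj23 (na_inj hh).symm).elim)
    simp only [tterm, Equiv.Perm.mul_apply, s1, s2, s3, s4, s5, s6]
    rw [if_pos hd, if_pos hd]
    exact antisym2 _ _ _ _ _ _
  · simp only [tterm]
    rw [if_neg hd, if_neg hd]
    ring

lemma vanish1 {d : ℕ} (m n : ℕ) (z : Fin (m + n) → EuclideanSpace ℝ (Fin d))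
    (i1 i2 i3 b1 b2 b3 : Fin m) (j1 j2 j3 c1 c2 c3 : Fin n)
    (m1 : b1 ≠ i1) (m2 : b2 ≠ i1) (m3 : b3 ≠ i1)
    (m4 : c1 ≠ j1) (m5 : c2 ≠ j1) (m6 : c3 ≠ j1) :
    ∑ p : Equiv.Perm (Fin (m + n)),
      tterm m n z p (i1, i2, i3, j1, j2, j3) * tterm m n z p (b1, b2, b3, c1, c2, c3) = 0 := by
  apply perm_sum_neg _ _ (Equiv.swap (Fin.castAdd n i1) (Fin.natAdd m j1))
  intro p
  have fix : tterm m n z (p * Equiv.swap (Fin.castAdd n i1) (Fin.natAdd m j1))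
      (b1, b2, b3, c1, c2, c3) = tterm m n z p (b1, b2, b3, c1, c2, c3) := by
    apply tterm_fix
    · exact Equiv.swap_apply_of_ne_of_ne (fun hh => (m1 (ca_inj hh)).elim) (ca_ne_na _ _)
    · exact Equiv.swap_apply_of_ne_of_ne (fun hh => (m2 (ca_inj hh)).elim) (ca_ne_na _ _)
    · exact Equiv.swap_apply_of_ne_of_ne (fun hh => (m3 (ca_inj hh)).elim) (ca_ne_na _ _)
    · exact Equiv.swap_apply_of_ne_of_ne (fun hh => (ca_ne_na i1 c1) hh.symm)
        (fun hh => (m4 (na_inj hh)).elim)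
    · exact Equiv.swap_apply_of_ne_of_ne (fun hh => (ca_ne_na i1 c2) hh.symm)
        (fun hh => (m5 (na_inj hh)).elim)
    · exact Equiv.swap_apply_of_ne_of_ne (fun hh => (ca_ne_na i1 c3) hh.symm)
        (fun hh => (m6 (na_inj hh)).elim)
  rw [fix, tterm_swap_neg1]
  ring

lemma vanish2 {d : ℕ} (m n : ℕ) (z : Fin (m + n) → EuclideanSpace ℝ (Fin d))
    (i1 i2 i3 b1 b2 b3 : Fin m) (j1 j2 j3 c1 c2 c3 : Fin n)
    (m1 : b1 ≠ i2) (m2 : b2 ≠ i2) (m3 : b3 ≠ i2)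
    (m4 : c1 ≠ j2) (m5 : c2 ≠ j2) (m6 : c3 ≠ j2) :
    ∑ p : Equiv.Perm (Fin (m + n)),
      tterm m n z p (i1, i2, i3, j1, j2, j3) * tterm m n z p (b1, b2, b3, c1, c2, c3) = 0 := by
  apply perm_sum_neg _ _ (Equiv.swap (Fin.castAdd n i2) (Fin.natAdd m j2))
  intro p
  have fix : tterm m n z (p * Equiv.swap (Fin.castAdd n i2) (Fin.natAdd m j2))
      (b1, b2, b3, c1, c2, c3) = tterm m n z p (b1, b2, b3, c1, c2, c3) := by
    apply tterm_fix
    · exact Equiv.swap_apply_of_ne_of_ne (fun hh => (m1 (ca_inj hh)).elim) (ca_ne_na _ _)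
    · exact Equiv.swap_apply_of_ne_of_ne (fun hh => (m2 (ca_inj hh)).elim) (ca_ne_na _ _)
    · exact Equiv.swap_apply_of_ne_of_ne (fun hh => (m3 (ca_inj hh)).elim) (ca_ne_na _ _)
    · exact Equiv.swap_apply_of_ne_of_ne (fun hh => (ca_ne_na i2 c1) hh.symm)
        (fun hh => (m4 (na_inj hh)).elim)
    · exact Equiv.swap_apply_of_ne_of_ne (fun hh => (ca_ne_na i2 c2) hh.symm)
        (fun hh => (m5 (na_inj hh)).elim)
    · exact Equiv.swap_apply_of_ne_of_ne (fun hh => (ca_ne_na i2 c3) hh.symm)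
        (fun hh => (m6 (na_inj hh)).elim)
  rw [fix, tterm_swap_neg2]
  ring

lemma vanish0 {d : ℕ} (m n : ℕ) (z : Fin (m + n) → EuclideanSpace ℝ (Fin d))
    (A : Tup m n) : ∑ p : Equiv.Perm (Fin (m + n)), tterm m n z p A = 0 := by
  obtain ⟨i1, i2, i3, j1, j2, j3⟩ := A
  exact perm_sum_neg _ _ (Equiv.swap (Fin.castAdd n i1) (Fin.natAdd m j1))
    (fun p => tterm_swap_neg1 m n z p i1 i2 i3 j1 j2 j3)

/-! #### Counting -/

lemma ind_nonneg (pp : Prop) [Decidable pp] : (0:ℝ) ≤ if pp then 1 else 0 := by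
  split_ifs <;> norm_num

lemma ind_mul_ne {α : Type*} [DecidableEq α] {a a' : α} (h : a ≠ a') (x : α) :
    (if x = a then (1:ℝ) else 0) * (if x = a' then 1 else 0) = 0 := by
  split_ifs with h1 h2
  · exact absurd (h1 ▸ h2) (by simpa [h1] using h)
  all_goals ring

lemma sum_ind {k : ℕ} (a : Fin k) : ∑ x : Fin k, (if x = a then (1:ℝ) else 0) = 1 := by simp

lemma genstep {k : ℕ} {a a' : Fin k} (h : a ≠ a') (u v w c R S : ℝ) :
    ∑ x : Fin k,
      (u * ((R + if x = a then (1:ℝ) else 0) * (S + if x = a' then (1:ℝ) else 0))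
        + v * (R + if x = a then (1:ℝ) else 0)
        + w * (S + if x = a' then (1:ℝ) else 0) + c)
    = (u * k) * (R * S) + (u + v * k) * R + (u + w * k) * S + (v + w + c * k) := by
  have expand : ∀ x : Fin k,
      (u * ((R + if x = a then (1:ℝ) else 0) * (S + if x = a' then (1:ℝ) else 0))
        + v * (R + if x = a then (1:ℝ) else 0)
        + w * (S + if x = a' then (1:ℝ) else 0) + c)
      = (u * (R*S) + v*R + w*S + c)
        + (u*S + v) * (if x = a then (1:ℝ) else 0)
        + (u*R + w) * (if x = a' then (1:ℝ) else 0)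
        + u * ((if x = a then (1:ℝ) else 0) * (if x = a' then (1:ℝ) else 0)) := by
    intro x; ring
  rw [Finset.sum_congr rfl (fun x _ => expand x)]
  simp only [Finset.sum_add_distrib, Finset.sum_const, Finset.card_univ, Fintype.card_fin,
    nsmul_eq_mul, ← Finset.mul_sum, sum_ind, ind_mul_ne h, Finset.sum_const_zero]
  ring

lemma ind_good_le (p1 p2 p3 p4 p5 p6 q1 q2 q3 q4 q5 q6 : Prop)
    [Decidable p1] [Decidable p2] [Decidable p3] [Decidable p4] [Decidable p5] [Decidable p6]
    [Decidable q1] [Decidable q2] [Decidable q3] [Decidable q4] [Decidable q5] [Decidable q6] :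
    (if (p1 ∨ p2 ∨ p3 ∨ p4 ∨ p5 ∨ p6) ∧ (q1 ∨ q2 ∨ q3 ∨ q4 ∨ q5 ∨ q6) then (1:ℝ) else 0)
      ≤ 1 * (((0:ℝ) + (if p1 then (1:ℝ) else 0) + (if p2 then 1 else 0) + (if p3 then 1 else 0)
            + (if p4 then 1 else 0) + (if p5 then 1 else 0) + (if p6 then 1 else 0))
          * ((0:ℝ) + (if q1 then (1:ℝ) else 0) + (if q2 then 1 else 0) + (if q3 then 1 else 0)
            + (if q4 then 1 else 0) + (if q5 then 1 else 0) + (if q6 then 1 else 0)))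
        + 0 * ((0:ℝ) + (if p1 then (1:ℝ) else 0) + (if p2 then 1 else 0) + (if p3 then 1 else 0)
            + (if p4 then 1 else 0) + (if p5 then 1 else 0) + (if p6 then 1 else 0))
        + 0 * ((0:ℝ) + (if q1 then (1:ℝ) else 0) + (if q2 then 1 else 0) + (if q3 then 1 else 0)
            + (if q4 then 1 else 0) + (if q5 then 1 else 0) + (if q6 then 1 else 0))
        + 0 := by
  have e1 := ind_nonneg p1; have e2 := ind_nonneg p2; have e3 := ind_nonneg p3
  have e4 := ind_nonneg p4; have e5 := ind_nonneg p5; have e6 := ind_nonneg p6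
  have f1 := ind_nonneg q1; have f2 := ind_nonneg q2; have f3 := ind_nonneg q3
  have f4 := ind_nonneg q4; have f5 := ind_nonneg q5; have f6 := ind_nonneg q6
  by_cases hg : (p1 ∨ p2 ∨ p3 ∨ p4 ∨ p5 ∨ p6) ∧ (q1 ∨ q2 ∨ q3 ∨ q4 ∨ q5 ∨ q6)
  · rw [if_pos hg]
    have hp : (1:ℝ) ≤ (0:ℝ) + (if p1 then (1:ℝ) else 0) + (if p2 then 1 else 0)
        + (if p3 then 1 else 0) + (if p4 then 1 else 0) + (if p5 then 1 else 0)
        + (if p6 then 1 else 0) := by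
      rcases hg.1 with h | h | h | h | h | h <;> rw [if_pos h] <;> linarith
    have hq : (1:ℝ) ≤ (0:ℝ) + (if q1 then (1:ℝ) else 0) + (if q2 then 1 else 0)
        + (if q3 then 1 else 0) + (if q4 then 1 else 0) + (if q5 then 1 else 0)
        + (if q6 then 1 else 0) := by
      rcases hg.2 with h | h | h | h | h | h <;> rw [if_pos h] <;> linarith
    nlinarith [hp, hq]
  · rw [if_neg hg]
    nlinarith [e1, e2, e3, e4, e5, e6, f1, f2, f3, f4, f5, f6]

def goodC {m n : ℕ} (A B : Tup m n) : Prop :=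
  (B.1 = A.1 ∨ B.2.1 = A.1 ∨ B.2.2.1 = A.1 ∨ B.2.2.2.1 = A.2.2.2.1 ∨
    B.2.2.2.2.1 = A.2.2.2.1 ∨ B.2.2.2.2.2 = A.2.2.2.1) ∧
  (B.1 = A.2.1 ∨ B.2.1 = A.2.1 ∨ B.2.2.1 = A.2.1 ∨ B.2.2.2.1 = A.2.2.2.2.1 ∨
    B.2.2.2.2.1 = A.2.2.2.2.1 ∨ B.2.2.2.2.2 = A.2.2.2.2.1)

instance goodC_dec {m n : ℕ} (A B : Tup m n) : Decidable (goodC A B) := by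
  unfold goodC; infer_instance

lemma count_good {m n : ℕ} (A : Tup m n) (ha : A.1 ≠ A.2.1) (hb : A.2.2.2.1 ≠ A.2.2.2.2.1) :
    ∑ B : Tup m n, (if goodC A B then (1:ℝ) else 0)
      ≤ 6*(m:ℝ)*(n:ℝ)^3 + 18*(m:ℝ)^2*(n:ℝ)^2 + 6*(m:ℝ)^3*(n:ℝ) := by
  have step1 : ∑ B : Tup m n, (if goodC A B then (1:ℝ) else 0)
      ≤ ∑ B : Tup m n,
        (1 * (((0:ℝ) + (if B.1 = A.1 then (1:ℝ) else 0) + (if B.2.1 = A.1 then 1 else 0)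
              + (if B.2.2.1 = A.1 then 1 else 0) + (if B.2.2.2.1 = A.2.2.2.1 then 1 else 0)
              + (if B.2.2.2.2.1 = A.2.2.2.1 then 1 else 0)
              + (if B.2.2.2.2.2 = A.2.2.2.1 then 1 else 0))
            * ((0:ℝ) + (if B.1 = A.2.1 then (1:ℝ) else 0) + (if B.2.1 = A.2.1 then 1 else 0)
              + (if B.2.2.1 = A.2.1 then 1 else 0) + (if B.2.2.2.1 = A.2.2.2.2.1 then 1 else 0)
              + (if B.2.2.2.2.1 = A.2.2.2.2.1 then 1 else 0)
              + (if B.2.2.2.2.2 = A.2.2.2.2.1 then 1 else 0)))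
          + 0 * (((0:ℝ) + (if B.1 = A.1 then (1:ℝ) else 0) + (if B.2.1 = A.1 then 1 else 0)
              + (if B.2.2.1 = A.1 then 1 else 0) + (if B.2.2.2.1 = A.2.2.2.1 then 1 else 0)
              + (if B.2.2.2.2.1 = A.2.2.2.1 then 1 else 0)
              + (if B.2.2.2.2.2 = A.2.2.2.1 then 1 else 0)))
          + 0 * (((0:ℝ) + (if B.1 = A.2.1 then (1:ℝ) else 0) + (if B.2.1 = A.2.1 then 1 else 0)
              + (if B.2.2.1 = A.2.1 then 1 else 0) + (if B.2.2.2.1 = A.2.2.2.2.1 then 1 else 0)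
              + (if B.2.2.2.2.1 = A.2.2.2.2.1 then 1 else 0)
              + (if B.2.2.2.2.2 = A.2.2.2.2.1 then 1 else 0)))
          + 0) := by
    apply Finset.sum_le_sum
    intro B _
    exact ind_good_le _ _ _ _ _ _ _ _ _ _ _ _
  refine le_trans step1 (le_of_eq ?_)
  simp only [Fintype.sum_prod_type]
  dsimp +instances only
  simp only [genstep ha, genstep hb]
  ring

/-! #### Final arithmetic -/

lemma final_arith (rm rn : ℝ) (hm : 3 ≤ rm) (hn : 3 ≤ rn) :
    ((rm * (rm - 1) * (rm - 2) * (rn * (rn - 1) * (rn - 2)))⁻¹)^2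
      * ((rm^3 * rn^3) * (6*rm*rn^3 + 18*rm^2*rn^2 + 6*rm^3*rn))
    ≤ 20000 * (1/rm + 1/rn)^2 := by
  have hm0 : (0:ℝ) < rm := by linarith
  have hn0 : (0:ℝ) < rn := by linarith
  have hm3 : (2/9) * rm^3 ≤ rm * (rm - 1) * (rm - 2) := by nlinarith [sq_nonneg (rm - 3)]
  have hn3 : (2/9) * rn^3 ≤ rn * (rn - 1) * (rn - 2) := by nlinarith [sq_nonneg (rn - 3)]
  have hDlow : (4/81) * (rm^3 * rn^3)
      ≤ rm * (rm - 1) * (rm - 2) * (rn * (rn - 1) * (rn - 2)) := by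
    calc (4/81) * (rm^3 * rn^3) = ((2/9) * rm^3) * ((2/9) * rn^3) := by ring
      _ ≤ (rm * (rm - 1) * (rm - 2)) * (rn * (rn - 1) * (rn - 2)) := by
          apply mul_le_mul hm3 hn3 (by positivity)
          nlinarith [hm3]
  have hDpos : (0:ℝ) < rm * (rm - 1) * (rm - 2) * (rn * (rn - 1) * (rn - 2)) :=
    lt_of_lt_of_le (by positivity) hDlow
  have h1 : (1/rm + 1/rn) = (rm + rn)/(rm*rn) := by field_simp; ring
  rw [h1, div_pow, inv_pow, inv_mul_le_iff₀ (by positivity)]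
  have hD2 : ((4/81) * (rm^3 * rn^3))^2
      ≤ (rm * (rm - 1) * (rm - 2) * (rn * (rn - 1) * (rn - 2)))^2 :=
    pow_le_pow_left₀ (by positivity) hDlow 2
  have base : 6*rn^2 + 18*(rm*rn) + 6*rm^2 ≤ 48*(rm + rn)^2 := by nlinarith [mul_pos hm0 hn0]
  have target : (rm^3 * rn^3) * (6*rm*rn^3 + 18*rm^2*rn^2 + 6*rm^3*rn)
      ≤ ((4/81) * (rm^3 * rn^3))^2 * (20000 * ((rm + rn)^2/(rm*rn)^2)) := by
    have expand : ((4/81) * (rm^3 * rn^3))^2 * (20000 * ((rm + rn)^2/(rm*rn)^2))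
        = (320000/6561) * (rm^4*rn^4*(rm + rn)^2) := by
      field_simp
      ring
    rw [expand]
    have hq : (0:ℝ) ≤ rm^4*rn^4*(rm + rn)^2 := by positivity
    calc (rm^3 * rn^3) * (6*rm*rn^3 + 18*rm^2*rn^2 + 6*rm^3*rn)
        = (rm^4*rn^4) * (6*rn^2 + 18*(rm*rn) + 6*rm^2) := by ring
      _ ≤ (rm^4*rn^4) * (48*(rm + rn)^2) := by
          apply mul_le_mul_of_nonneg_left base (by positivity)
      _ ≤ (320000/6561) * (rm^4*rn^4*(rm + rn)^2) := by nlinarith [hq]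
  calc (rm^3 * rn^3) * (6*rm*rn^3 + 18*rm^2*rn^2 + 6*rm^3*rn)
      ≤ ((4/81) * (rm^3 * rn^3))^2 * (20000 * ((rm + rn)^2/(rm*rn)^2)) := target
    _ ≤ (rm * (rm - 1) * (rm - 2) * (rn * (rn - 1) * (rn - 2)))^2
          * (20000 * ((rm + rn)^2/(rm*rn)^2)) := by
        apply mul_le_mul_of_nonneg_right hD2 (by positivity)

end Stmt9Aux

open Stmt9Aux

/-- Moments under permutations, Lemma for Theorem 3.1: for arbitrary points
`z₁,…,z_N ∈ ℝ^d` (`N = m+n`, `m,n ≥ 3`, `d ≥ 1`), the permutation average of `U*(π)` vanishes,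
and there is a universal constant `C > 0` (independent of `d`, `m`, `n` and the points) with
`(1/N!) Σ_π U*(π)² ≤ C (1/m + 1/n)²`. -/
theorem stmt9 :
    ∃ C : ℝ, 0 < C ∧
      ∀ (d m n : ℕ), 1 ≤ d → 3 ≤ m → 3 ≤ n →
        ∀ z : Fin (m + n) → EuclideanSpace ℝ (Fin d),
          ((Nat.factorial (m + n) : ℝ))⁻¹
              * ∑ π' : Equiv.Perm (Fin (m + n)), UStarPerm m n z π' = 0 ∧
          ((Nat.factorial (m + n) : ℝ))⁻¹
              * ∑ π' : Equiv.Perm (Fin (m + n)), (UStarPerm m n z π') ^ 2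
            ≤ C * (1 / m + 1 / n) ^ 2 := by
  refine ⟨20000, by norm_num, ?_⟩
  intro d m n hd hm hn z
  set Dinv : ℝ :=
    ((m : ℝ) * ((m : ℝ) - 1) * ((m : ℝ) - 2) * ((n : ℝ) * ((n : ℝ) - 1) * ((n : ℝ) - 2)))⁻¹
    with hDinv
  have Nfpos : (0:ℝ) < (Nat.factorial (m + n) : ℝ) := by
    exact_mod_cast Nat.factorial_pos (m + n)
  constructor
  · -- part (i)
    rw [Finset.sum_congr rfl (fun p _ => UStarPerm_eq m n z p), ← Finset.mul_sum,
      Finset.sum_comm, Finset.sum_congr rfl (fun A _ => vanish0 m n z A)]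
    simp
  · -- part (ii)
    set Nr : ℝ := (Nat.factorial (m + n) : ℝ) with hNr
    set K : ℝ := 6*(m:ℝ)*(n:ℝ)^3 + 18*(m:ℝ)^2*(n:ℝ)^2 + 6*(m:ℝ)^3*(n:ℝ) with hK
    have hKnn : (0:ℝ) ≤ K := by positivity
    -- pointwise key bound
    have key_AB : ∀ A B : Tup m n,
        ∑ p : Equiv.Perm (Fin (m + n)), tterm m n z p A * tterm m n z p B
          ≤ Nr * ((if distC A then (1:ℝ) else 0) * (if goodC A B then 1 else 0)) := by
      intro A B
      by_cases hdA : distC A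
      · by_cases hg : goodC A B
        · rw [if_pos hdA, if_pos hg, mul_one, mul_one]
          calc ∑ p : Equiv.Perm (Fin (m + n)), tterm m n z p A * tterm m n z p B
              ≤ ∑ _p : Equiv.Perm (Fin (m + n)), (1:ℝ) := by
                apply Finset.sum_le_sum
                intro p _
                have h1 := abs_tterm_le m n z p A
                have h2 := abs_tterm_le m n z p B
                have h3 := le_abs_self (tterm m n z p A * tterm m n z p B)
                have h4 := abs_mul (tterm m n z p A) (tterm m n z p B)
                have h5 := abs_nonneg (tterm m n z p A)
                have h6 := abs_nonneg (tterm m n z p B)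
                nlinarith
            _ = Nr := by
                simp [hNr, Finset.card_univ, Fintype.card_perm, Fintype.card_fin]
        · rw [if_neg hg, mul_zero, mul_zero]
          apply le_of_eq
          obtain ⟨i1, i2, i3, j1, j2, j3⟩ := A
          obtain ⟨b1, b2, b3, c1, c2, c3⟩ := B
          unfold goodC at hg
          rw [not_and_or] at hg
          rcases hg with hg | hg
          · push_neg at hg
            obtain ⟨g1, g2, g3, g4, g5, g6⟩ := hg
            exact vanish1 m n z i1 i2 i3 b1 b2 b3 j1 j2 j3 c1 c2 c3 g1 g2 g3 g4 g5 g6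
          · push_neg at hg
            obtain ⟨g1, g2, g3, g4, g5, g6⟩ := hg
            exact vanish2 m n z i1 i2 i3 b1 b2 b3 j1 j2 j3 c1 c2 c3 g1 g2 g3 g4 g5 g6
      · rw [if_neg hdA, zero_mul, mul_zero]
        apply le_of_eq
        apply Finset.sum_eq_zero
        intro p _
        rw [tterm_zero z p hdA, zero_mul]
    -- per-A bound
    have sumB : ∀ A : Tup m n,
        ∑ B : Tup m n, ∑ p : Equiv.Perm (Fin (m + n)), tterm m n z p A * tterm m n z p B
          ≤ Nr * K := by
      intro A
      calc ∑ B : Tup m n, ∑ p : Equiv.Perm (Fin (m + n)), tterm m n z p A * tterm m n z p B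
          ≤ ∑ B : Tup m n,
              Nr * ((if distC A then (1:ℝ) else 0) * (if goodC A B then 1 else 0)) :=
            Finset.sum_le_sum (fun B _ => key_AB A B)
        _ = Nr * ((if distC A then (1:ℝ) else 0)
              * ∑ B : Tup m n, (if goodC A B then (1:ℝ) else 0)) := by
            rw [← Finset.mul_sum, ← Finset.mul_sum]
        _ ≤ Nr * K := by
            by_cases hdA : distC A
            · rw [if_pos hdA, one_mul]
              have hc := count_good A hdA.1 hdA.2.2.2.1
              apply mul_le_mul_of_nonneg_left _ Nfpos.le
              exact hc
            · rw [if_neg hdA, zero_mul, mul_zero]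
              positivity
    -- assemble
    have e1 : ∀ p : Equiv.Perm (Fin (m + n)),
        (UStarPerm m n z p)^2
          = Dinv^2 * ∑ A : Tup m n, ∑ B : Tup m n, tterm m n z p A * tterm m n z p B := by
      intro p
      rw [UStarPerm_eq m n z p, mul_pow]
      congr 1
      rw [sq, Finset.sum_mul_sum]
    have e2 : ∑ p : Equiv.Perm (Fin (m + n)), (UStarPerm m n z p)^2
        = Dinv^2 * ∑ A : Tup m n, ∑ B : Tup m n,
            ∑ p : Equiv.Perm (Fin (m + n)), tterm m n z p A * tterm m n z p B := by
      rw [Finset.sum_congr rfl (fun p _ => e1 p), ← Finset.mul_sum]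
      congr 1
      rw [Finset.sum_comm]
      apply Finset.sum_congr rfl
      intro A _
      rw [Finset.sum_comm]
    have cardT : ((Finset.univ : Finset (Tup m n)).card : ℝ) = (m:ℝ)^3 * (n:ℝ)^3 := by
      simp [Finset.card_univ]
      push_cast
      ring
    have e3 : ∑ A : Tup m n, ∑ B : Tup m n,
        ∑ p : Equiv.Perm (Fin (m + n)), tterm m n z p A * tterm m n z p B
        ≤ ((m:ℝ)^3 * (n:ℝ)^3) * (Nr * K) := by
      calc ∑ A : Tup m n, ∑ B : Tup m n,
            ∑ p : Equiv.Perm (Fin (m + n)), tterm m n z p A * tterm m n z p B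
          ≤ ∑ _A : Tup m n, Nr * K := Finset.sum_le_sum (fun A _ => sumB A)
        _ = ((m:ℝ)^3 * (n:ℝ)^3) * (Nr * K) := by
            rw [Finset.sum_const, nsmul_eq_mul, cardT]
    have bound : ∑ p : Equiv.Perm (Fin (m + n)), (UStarPerm m n z p)^2
        ≤ Dinv^2 * (((m:ℝ)^3 * (n:ℝ)^3) * (Nr * K)) := by
      rw [e2]
      exact mul_le_mul_of_nonneg_left e3 (sq_nonneg _)
    have hm' : (3:ℝ) ≤ (m:ℝ) := by exact_mod_cast hm
    have hn' : (3:ℝ) ≤ (n:ℝ) := by exact_mod_cast hn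
    calc Nr⁻¹ * ∑ p : Equiv.Perm (Fin (m + n)), (UStarPerm m n z p)^2
        ≤ Nr⁻¹ * (Dinv^2 * (((m:ℝ)^3 * (n:ℝ)^3) * (Nr * K))) :=
          mul_le_mul_of_nonneg_left bound (inv_nonneg.2 Nfpos.le)
      _ = Dinv^2 * (((m:ℝ)^3 * (n:ℝ)^3) * K) := by
          have : Nr⁻¹ * (Dinv^2 * (((m:ℝ)^3 * (n:ℝ)^3) * (Nr * K)))
              = (Nr⁻¹ * Nr) * (Dinv^2 * (((m:ℝ)^3 * (n:ℝ)^3) * K)) := by ring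
          rw [this, inv_mul_cancel₀ (ne_of_gt Nfpos), one_mul]
      _ ≤ 20000 * (1 / (m:ℝ) + 1 / (n:ℝ))^2 := by
          rw [hDinv, hK]
          exact final_arith (m:ℝ) (n:ℝ) hm' hn'
end
end
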